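/- The class ℒ(RDFAwtl) is not closed under reversal, (disjoint) product (concatenation), Kleene plus, Kleene star, or shuffle. Witnesses: L_c^R = { c·w : w ∈ {a,b}*, |w|_a ≥ |w|_b }, L_≥ = { w ∈ {a,b}* : |w|_a ≥ |w|_b }, and {c} are all accepted by DFAwtls, yet (L_c^R)^R = L_c = L_≥·{c} is not accepted by any RDFAwtl; (L_c^R)^+ and (L_c^R)^* are not accepted by any RDFAwtl; and L_= ⧢ L_{2=} = { w ∈ {a,b}* : |w|_a ≤ |w|_b ≤ 2·|w|_a } is not accepted by any RDFAwtl although L_= and L_{2=} are accepted by DFAwtls. -/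

import Mathlib

/-- A nondeterministic finite automaton with translucent letters (NFAwtl). -/
structure NFAwtl (Q α : Type) where
  τ : Q → Set α
  I : Set Q
  F : Set Q
  δ : Q → α → Set Q
  tr : ∀ q a, a ∈ τ q → δ q a = ∅

namespace NFAwtl

variable {Q α : Type}

/-- One computation step of an NFAwtl: delete the leftmost non-translucent letter
and change state (the head returns to the left end). -/
def Step (A : NFAwtl Q α) : Q × List α → Q × List α → Prop := fun c c' =>
  ∃ u a v, c.2 = u ++ a :: v ∧ (∀ x ∈ u, x ∈ A.τ c.1) ∧ a ∉ A.τ c.1 ∧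
    c'.1 ∈ A.δ c.1 a ∧ c'.2 = u ++ v

/-- Acceptance: from some initial state, reach a configuration whose remaining
letters are all translucent for a final state. -/
def Accepts (A : NFAwtl Q α) (w : List α) : Prop :=
  ∃ q₀ ∈ A.I, ∃ q w', Relation.ReflTransGen A.Step (q₀, w) (q, w') ∧
    (∀ x ∈ w', x ∈ A.τ q) ∧ q ∈ A.F

def lang (A : NFAwtl Q α) : Set (List α) := { w | A.Accepts w }

/-- A DFAwtl: single initial state and at most one transition per state/letter. -/
def Deterministic (A : NFAwtl Q α) : Prop :=
  (∃ q₀, A.I = {q₀}) ∧ ∀ q a, (A.δ q a).Subsingleton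

end NFAwtl

/-- A repetitive NFAwtl (RNFAwtl): on the end-of-tape marker it may accept
(states in `Facc`) or change state via `δend` and continue. -/
structure RNFAwtl (Q α : Type) where
  τ : Q → Set α
  I : Set Q
  δ : Q → α → Set Q
  δend : Q → Set Q
  Facc : Set Q
  tr : ∀ q a, a ∈ τ q → δ q a = ∅
  accEnd : ∀ q, q ∈ Facc → δend q = ∅

namespace RNFAwtl

variable {Q α : Type}

/-- One computation step of an RNFAwtl: either delete the leftmost
non-translucent letter, or, when all remaining letters are translucent,
change state via a `◁`-transition and continue. -/
def Step (A : RNFAwtl Q α) : Q × List α → Q × List α → Prop := fun c c' =>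
  (∃ u a v, c.2 = u ++ a :: v ∧ (∀ x ∈ u, x ∈ A.τ c.1) ∧ a ∉ A.τ c.1 ∧
    c'.1 ∈ A.δ c.1 a ∧ c'.2 = u ++ v)
  ∨ ((∀ x ∈ c.2, x ∈ A.τ c.1) ∧ c'.1 ∈ A.δend c.1 ∧ c'.2 = c.2)

def Accepts (A : RNFAwtl Q α) (w : List α) : Prop :=
  ∃ q₀ ∈ A.I, ∃ q w', Relation.ReflTransGen A.Step (q₀, w) (q, w') ∧
    (∀ x ∈ w', x ∈ A.τ q) ∧ q ∈ A.Facc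

def lang (A : RNFAwtl Q α) : Set (List α) := { w | A.Accepts w }

/-- An RDFAwtl: single initial state and deterministic transitions. -/
def Deterministic (A : RNFAwtl Q α) : Prop :=
  (∃ q₀, A.I = {q₀}) ∧ (∀ q a, (A.δ q a).Subsingleton) ∧ ∀ q, (A.δend q).Subsingleton

end RNFAwtl

/-- A non-returning repetitive NFAwtl (nr-NFAwtl): the head continues from the
position of the last deleted letter; on the end-of-tape marker it may change
state and return the head to the left end. -/
structure NrNFAwtl (Q α : Type) where
  τ : Q → Set α
  I : Set Q
  δ : Q → α → Set Q
  δend : Q → Set Q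
  Facc : Set Q
  tr : ∀ q a, a ∈ τ q → δ q a = ∅
  accEnd : ∀ q, q ∈ Facc → δend q = ∅

namespace NrNFAwtl

variable {Q α : Type}

/-- Configurations are `(x, q, w)`: `x` is the already-skipped prefix, the head
is on the first letter of `w`. -/
def Step (A : NrNFAwtl Q α) :
    List α × Q × List α → List α × Q × List α → Prop := fun c c' =>
  (∃ u a v, c.2.2 = u ++ a :: v ∧ (∀ x ∈ u, x ∈ A.τ c.2.1) ∧ a ∉ A.τ c.2.1 ∧
    c'.2.1 ∈ A.δ c.2.1 a ∧ c'.1 = c.1 ++ u ∧ c'.2.2 = v)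
  ∨ ((∀ x ∈ c.2.2, x ∈ A.τ c.2.1) ∧ c'.2.1 ∈ A.δend c.2.1 ∧ c'.1 = [] ∧
    c'.2.2 = c.1 ++ c.2.2)

def Accepts (A : NrNFAwtl Q α) (w : List α) : Prop :=
  ∃ q₀ ∈ A.I, ∃ x q w', Relation.ReflTransGen A.Step ([], q₀, w) (x, q, w') ∧
    (∀ y ∈ w', y ∈ A.τ q) ∧ q ∈ A.Facc

def lang (A : NrNFAwtl Q α) : Set (List α) := { w | A.Accepts w }

def Deterministic (A : NrNFAwtl Q α) : Prop :=
  (∃ q₀, A.I = {q₀}) ∧ (∀ q a, (A.δ q a).Subsingleton) ∧ ∀ q, (A.δend q).Subsingleton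

end NrNFAwtl

/-- A non-repetitive non-returning NFAwtl (nr-nr-NFAwtl): non-returning, and it
must halt as soon as all remaining letters to the right are translucent. -/
structure NrnrNFAwtl (Q α : Type) where
  τ : Q → Set α
  I : Set Q
  F : Set Q
  δ : Q → α → Set Q
  tr : ∀ q a, a ∈ τ q → δ q a = ∅

namespace NrnrNFAwtl

variable {Q α : Type}

def Step (A : NrnrNFAwtl Q α) :
    List α × Q × List α → List α × Q × List α → Prop := fun c c' =>
  ∃ u a v, c.2.2 = u ++ a :: v ∧ (∀ x ∈ u, x ∈ A.τ c.2.1) ∧ a ∉ A.τ c.2.1 ∧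
    c'.2.1 ∈ A.δ c.2.1 a ∧ c'.1 = c.1 ++ u ∧ c'.2.2 = v

def Accepts (A : NrnrNFAwtl Q α) (w : List α) : Prop :=
  ∃ q₀ ∈ A.I, ∃ x q w', Relation.ReflTransGen A.Step ([], q₀, w) (x, q, w') ∧
    (∀ y ∈ w', y ∈ A.τ q) ∧ q ∈ A.F

def lang (A : NrnrNFAwtl Q α) : Set (List α) := { w | A.Accepts w }

def Deterministic (A : NrnrNFAwtl Q α) : Prop :=
  (∃ q₀, A.I = {q₀}) ∧ ∀ q a, (A.δ q a).Subsingleton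

end NrnrNFAwtl

/-- Language classes. -/
def NFAwtlLangs (α : Type) [Fintype α] : Set (Set (List α)) :=
  { L | ∃ (Q : Type) (_ : Fintype Q) (A : NFAwtl Q α), A.lang = L }

def DFAwtlLangs (α : Type) [Fintype α] : Set (Set (List α)) :=
  { L | ∃ (Q : Type) (_ : Fintype Q) (A : NFAwtl Q α), A.Deterministic ∧ A.lang = L }

def RNFAwtlLangs (α : Type) [Fintype α] : Set (Set (List α)) :=
  { L | ∃ (Q : Type) (_ : Fintype Q) (A : RNFAwtl Q α), A.lang = L }

def RDFAwtlLangs (α : Type) [Fintype α] : Set (Set (List α)) :=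
  { L | ∃ (Q : Type) (_ : Fintype Q) (A : RNFAwtl Q α), A.Deterministic ∧ A.lang = L }

def NrNFAwtlLangs (α : Type) [Fintype α] : Set (Set (List α)) :=
  { L | ∃ (Q : Type) (_ : Fintype Q) (A : NrNFAwtl Q α), A.lang = L }

def NrDFAwtlLangs (α : Type) [Fintype α] : Set (Set (List α)) :=
  { L | ∃ (Q : Type) (_ : Fintype Q) (A : NrNFAwtl Q α), A.Deterministic ∧ A.lang = L }

def NrnrNFAwtlLangs (α : Type) [Fintype α] : Set (Set (List α)) :=
  { L | ∃ (Q : Type) (_ : Fintype Q) (A : NrnrNFAwtl Q α), A.lang = L }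

def NrnrDFAwtlLangs (α : Type) [Fintype α] : Set (Set (List α)) :=
  { L | ∃ (Q : Type) (_ : Fintype Q) (A : NrnrNFAwtl Q α), A.Deterministic ∧ A.lang = L }

/-- The three-letter alphabet {a, b, c}. -/
inductive Al : Type
  | a | b | c
deriving DecidableEq

instance : Fintype Al := ⟨{Al.a, Al.b, Al.c}, fun x => by cases x <;> simp⟩

/-- The two-letter alphabet {a, b}. -/
inductive AB : Type
  | a | b
deriving DecidableEq

instance : Fintype AB := ⟨{AB.a, AB.b}, fun x => by cases x <;> simp⟩

inductive Shuffles {α : Type} : List α → List α → List α → Prop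
  | nil : Shuffles [] [] []
  | left {x : α} {u v w : List α} : Shuffles u v w → Shuffles (x :: u) v (x :: w)
  | right {x : α} {u v w : List α} : Shuffles u v w → Shuffles u (x :: v) (x :: w)

def shuffleLang {α : Type} (L₁ L₂ : Set (List α)) : Set (List α) :=
  { w | ∃ u ∈ L₁, ∃ v ∈ L₂, Shuffles u v w }

/-- L_c^R = { c·w : w ∈ {a,b}*, |w|_a ≥ |w|_b }. -/
def LcR : Language Al :=
  { u | ∃ w : List Al, Al.c ∉ w ∧ w.count Al.b ≤ w.count Al.a ∧ u = Al.c :: w }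

/-- L_≥ = { w ∈ {a,b}* : |w|_a ≥ |w|_b }. -/
def Lge : Set (List Al) := { w | Al.c ∉ w ∧ w.count Al.b ≤ w.count Al.a }

def Leq : Set (List AB) := { w | w.count AB.a = w.count AB.b }

def L2eq : Set (List AB) := { w | 2 * w.count AB.a = w.count AB.b }
section ListAux

variable {γ : Type*}

theorem decompUnique {P : γ → Prop} : ∀ {u u' : List γ} {x x' : γ} {v v' : List γ},
    u ++ x :: v = u' ++ x' :: v' → (∀ y ∈ u, P y) → ¬ P x → (∀ y ∈ u', P y) → ¬ P x' →
    u = u' ∧ x = x' ∧ v = v' := by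
  intro u
  induction u with
  | nil =>
    intro u' x x' v v' h hu hx hu' hx'
    cases u' with
    | nil => simp_all
    | cons z u'' =>
      exfalso
      simp only [List.nil_append, List.cons_append, List.cons.injEq] at h
      exact hx (h.1 ▸ hu' z (by simp))
  | cons z u ih =>
    intro u' x x' v v' h hu hx hu' hx'
    cases u' with
    | nil =>
      exfalso
      simp only [List.cons_append, List.nil_append, List.cons.injEq] at h
      exact hx' (h.1 ▸ hu z (by simp))
    | cons z' u'' =>
      simp only [List.cons_append, List.cons.injEq] at h
      obtain ⟨rfl, h2⟩ := h
      obtain ⟨h3, h4, h5⟩ := ih h2 (fun y hy => hu y (by simp [hy])) hx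
        (fun y hy => hu' y (by simp [hy])) hx'
      exact ⟨by rw [h3], h4, h5⟩

theorem existsSplit (P : γ → Prop) : ∀ (w : List γ),
    (∀ x ∈ w, P x) ∨ ∃ u x v, w = u ++ x :: v ∧ (∀ y ∈ u, P y) ∧ ¬ P x := by
  intro w
  induction w with
  | nil => left; simp
  | cons z w ih =>
    by_cases hz : P z
    · rcases ih with h | ⟨u, x, v, h1, h2, h3⟩
      · left; intro x hx; rcases List.mem_cons.1 hx with rfl | hx
        · exact hz
        · exact h x hx
      · right; exact ⟨z :: u, x, v, by simp [h1], by
          intro y hy; rcases List.mem_cons.1 hy with rfl | hy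
          · exact hz
          · exact h2 y hy, h3⟩
    · right; exact ⟨[], z, w, by simp, by simp, hz⟩

end ListAux

namespace NFAwtl

variable {Q α : Type} (A : NFAwtl Q α)

def AccFrom (q : Q) (w : List α) : Prop :=
  ∃ q' w', Relation.ReflTransGen A.Step (q, w) (q', w') ∧
    (∀ x ∈ w', x ∈ A.τ q') ∧ q' ∈ A.F

theorem accepts_iff {q₀ : Q} (h : A.I = {q₀}) (w : List α) :
    A.Accepts w ↔ A.AccFrom q₀ w := by
  constructor
  · rintro ⟨q', hq', rest⟩
    rw [h, Set.mem_singleton_iff] at hq'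
    subst hq'
    exact rest
  · intro hw
    exact ⟨q₀, by rw [h]; rfl, hw⟩

theorem accFrom_iff (q : Q) (w : List α) :
    A.AccFrom q w ↔ ((∀ x ∈ w, x ∈ A.τ q) ∧ q ∈ A.F) ∨
      ∃ p u x v, w = u ++ x :: v ∧ (∀ y ∈ u, y ∈ A.τ q) ∧ x ∉ A.τ q ∧
        p ∈ A.δ q x ∧ A.AccFrom p (u ++ v) := by
  constructor
  · rintro ⟨q', w', hrtg, ht, hf⟩
    rcases hrtg.cases_head with heq | ⟨cc, hstep, hrest⟩
    · cases heq
      exact Or.inl ⟨ht, hf⟩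
    · obtain ⟨cq, cw⟩ := cc
      obtain ⟨u, x, v, hw, hu, hx, hδ, hc2⟩ := hstep
      simp only at hw hu hx hδ hc2
      subst hc2
      exact Or.inr ⟨cq, u, x, v, hw, hu, hx, hδ, q', w', hrest, ht, hf⟩
  · rintro (⟨ht, hf⟩ | ⟨p, u, x, v, hw, hu, hx, hδ, q', w', hrtg, ht, hf⟩)
    · exact ⟨q, w, Relation.ReflTransGen.refl, ht, hf⟩
    · exact ⟨q', w', Relation.ReflTransGen.head ⟨u, x, v, hw, hu, hx, hδ, rfl⟩ hrtg, ht, hf⟩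

end NFAwtl
namespace NFAwtl

variable {Q α : Type} (A : NFAwtl Q α)

theorem accFrom_canon {q p : Q} {w u : List α} {x : α} {v : List α}
    (hw : w = u ++ x :: v) (hu : ∀ y ∈ u, y ∈ A.τ q) (hx : x ∉ A.τ q)
    (hδ : A.δ q x = {p}) : A.AccFrom q w ↔ A.AccFrom p (u ++ v) := by
  rw [accFrom_iff]
  constructor
  · rintro (⟨ht, hf⟩ | ⟨p', u', x', v', hw', hu', hx', hδ', hacc⟩)
    · exact absurd (ht x (by simp [hw])) hx
    · obtain ⟨rfl, rfl, rfl⟩ := decompUnique (hw.symm.trans hw') hu hx hu' hx'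
      rw [hδ, Set.mem_singleton_iff] at hδ'
      subst hδ'
      exact hacc
  · intro h
    exact Or.inr ⟨p, u, x, v, hw, hu, hx, by rw [hδ]; rfl, h⟩

theorem accFrom_stuck {q : Q} {w u : List α} {x : α} {v : List α}
    (hw : w = u ++ x :: v) (hu : ∀ y ∈ u, y ∈ A.τ q) (hx : x ∉ A.τ q)
    (hδ : A.δ q x = ∅) : ¬ A.AccFrom q w := by
  rw [accFrom_iff]
  rintro (⟨ht, _⟩ | ⟨p', u', x', v', hw', hu', hx', hδ', _⟩)
  · exact absurd (ht x (by simp [hw])) hx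
  · obtain ⟨rfl, rfl, rfl⟩ := decompUnique (hw.symm.trans hw') hu hx hu' hx'
    rw [hδ] at hδ'
    exact hδ'

theorem accFrom_final {q : Q} {w : List α} (ht : ∀ x ∈ w, x ∈ A.τ q) :
    A.AccFrom q w ↔ q ∈ A.F := by
  rw [accFrom_iff]
  constructor
  · rintro (⟨_, hf⟩ | ⟨p', u', x', v', hw', hu', hx', _, _⟩)
    · exact hf
    · exact absurd (ht x' (by simp [hw'])) hx'
  · intro h
    exact Or.inl ⟨ht, h⟩

end NFAwtl

/-- Three-state machine for `LcR` / `Lge`. -/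
def mkM3 (I : Set (Option Bool)) : NFAwtl (Option Bool) Al where
  τ := fun q => match q with
    | none => ∅
    | some false => {Al.a}
    | some true => {Al.b}
  I := I
  F := {some false}
  δ := fun q x => match q, x with
    | none, Al.c => {some false}
    | some false, Al.b => {some true}
    | some true, Al.a => {some false}
    | _, _ => ∅
  tr := by rintro (_ | (_ | _)) (_ | _ | _) h <;> first | rfl | simp_all

theorem mkM3_det (I : Set (Option Bool)) (q₀ : Option Bool) (h : I = {q₀}) :
    (mkM3 I).Deterministic := by
  refine ⟨⟨q₀, h⟩, ?_⟩
  rintro (_ | (_ | _)) (_ | _ | _) <;>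
    first
      | exact Set.subsingleton_empty
      | exact Set.subsingleton_singleton

theorem m3_char (I : Set (Option Bool)) : ∀ (n : ℕ) (w : List Al), w.length ≤ n →
    ((mkM3 I).AccFrom (some false) w ↔ (Al.c ∉ w ∧ w.count Al.b ≤ w.count Al.a)) ∧
    ((mkM3 I).AccFrom (some true) w ↔ (Al.c ∉ w ∧ w.count Al.b < w.count Al.a)) := by
  intro n
  induction n with
  | zero =>
    intro w hw
    have hw0 : w = [] := List.eq_nil_of_length_eq_zero (Nat.le_zero.1 hw)
    subst hw0
    constructor
    · rw [NFAwtl.accFrom_final _ (by simp)]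
      simp [mkM3]
    · rw [NFAwtl.accFrom_final _ (by simp)]
      simp [mkM3]
  | succ n ih =>
    intro w hw
    constructor
    · rcases existsSplit (fun x => x ∈ (mkM3 I).τ (some false)) w with hall | ⟨u, x, v, hweq, hu, hx⟩
      · rw [NFAwtl.accFrom_final _ hall]
        have h1 : Al.c ∉ w := fun hc => by simpa [mkM3] using hall Al.c hc
        have h2 : Al.b ∉ w := fun hb => by simpa [mkM3] using hall Al.b hb
        simp [mkM3, h1, List.count_eq_zero_of_not_mem h2]
      · have hulen : (u ++ v).length ≤ n := by
          have := hw
          rw [hweq] at this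
          simp only [List.length_append, List.length_cons] at this ⊢
          omega
        cases x with
        | a => exact absurd (by simp [mkM3]) hx
        | b =>
          rw [NFAwtl.accFrom_canon _ hweq hu hx rfl, (ih (u ++ v) hulen).2, hweq]
          have hcb : (Al.c ∈ u ++ v) ↔ (Al.c ∈ u ++ Al.b :: v) := by
            simp [List.mem_append]
          simp only [List.count_append, List.count_cons]
          constructor
          · rintro ⟨h1, h2⟩
            exact ⟨fun hc => h1 (hcb.2 hc), by simp_all; omega⟩
          · rintro ⟨h1, h2⟩
            exact ⟨fun hc => h1 (hcb.1 hc), by simp_all; omega⟩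
        | c =>
          have : ¬ (mkM3 I).AccFrom (some false) w := NFAwtl.accFrom_stuck _ hweq hu hx rfl
          simp only [this, false_iff]
          rintro ⟨h1, _⟩
          exact h1 (by simp [hweq])
    · rcases existsSplit (fun x => x ∈ (mkM3 I).τ (some true)) w with hall | ⟨u, x, v, hweq, hu, hx⟩
      · rw [NFAwtl.accFrom_final _ hall]
        have h1 : Al.c ∉ w := fun hc => by simpa [mkM3] using hall Al.c hc
        have h2 : Al.a ∉ w := fun hb => by simpa [mkM3] using hall Al.a hb
        simp [mkM3, h1, List.count_eq_zero_of_not_mem h2]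
      · have hulen : (u ++ v).length ≤ n := by
          have := hw
          rw [hweq] at this
          simp only [List.length_append, List.length_cons] at this ⊢
          omega
        cases x with
        | b => exact absurd (by simp [mkM3]) hx
        | a =>
          rw [NFAwtl.accFrom_canon _ hweq hu hx rfl, (ih (u ++ v) hulen).1, hweq]
          have hcb : (Al.c ∈ u ++ v) ↔ (Al.c ∈ u ++ Al.a :: v) := by
            simp [List.mem_append]
          simp only [List.count_append, List.count_cons]
          constructor
          · rintro ⟨h1, h2⟩
            exact ⟨fun hc => h1 (hcb.2 hc), by simp_all; omega⟩
          · rintro ⟨h1, h2⟩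
            exact ⟨fun hc => h1 (hcb.1 hc), by simp_all; omega⟩
        | c =>
          have : ¬ (mkM3 I).AccFrom (some true) w := NFAwtl.accFrom_stuck _ hweq hu hx rfl
          simp only [this, false_iff]
          rintro ⟨h1, _⟩
          exact h1 (by simp [hweq])

theorem m3_none_char (I : Set (Option Bool)) (w : List Al) :
    (mkM3 I).AccFrom none w ↔
      ∃ w', Al.c ∉ w' ∧ w'.count Al.b ≤ w'.count Al.a ∧ w = Al.c :: w' := by
  cases w with
  | nil =>
    rw [NFAwtl.accFrom_final _ (by simp)]
    simp [mkM3]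
  | cons x v =>
    cases x with
    | a =>
      have : ¬ (mkM3 I).AccFrom none (Al.a :: v) :=
        NFAwtl.accFrom_stuck _ (show Al.a :: v = [] ++ Al.a :: v by simp) (by simp)
          (by simp [mkM3]) rfl
      simp only [this, false_iff]
      rintro ⟨w', _, _, h⟩
      simp at h
    | b =>
      have : ¬ (mkM3 I).AccFrom none (Al.b :: v) :=
        NFAwtl.accFrom_stuck _ (show Al.b :: v = [] ++ Al.b :: v by simp) (by simp)
          (by simp [mkM3]) rfl
      simp only [this, false_iff]
      rintro ⟨w', _, _, h⟩
      simp at h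
    | c =>
      rw [NFAwtl.accFrom_canon _ (show Al.c :: v = [] ++ Al.c :: v by simp) (by simp)
        (by simp [mkM3]) rfl]
      simp only [List.nil_append]
      rw [(m3_char I v.length v le_rfl).1]
      constructor
      · rintro ⟨h1, h2⟩
        exact ⟨v, h1, h2, rfl⟩
      · rintro ⟨w', h1, h2, h3⟩
        obtain rfl : w' = v := by injection h3 |>.symm  -- fix later
        exact ⟨h1, h2⟩
/-- Machine for `{[c]}`. -/
def MC : NFAwtl Bool Al where
  τ := fun _ => ∅
  I := {false}
  F := {true}
  δ := fun q x => match q, x with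
    | false, Al.c => {true}
    | _, _ => ∅
  tr := by intro q x h; simp at h

theorem mc_true_char (w : List Al) : MC.AccFrom true w ↔ w = [] := by
  cases w with
  | nil => rw [NFAwtl.accFrom_final _ (by simp)]; simp [MC]
  | cons x v =>
    have : ¬ MC.AccFrom true (x :: v) :=
      NFAwtl.accFrom_stuck _ (show x :: v = [] ++ x :: v by simp) (by simp)
        (by simp [MC]) (by cases x <;> rfl)
    simp [this]

theorem mc_char (w : List Al) : MC.AccFrom false w ↔ w = [Al.c] := by
  cases w with
  | nil => rw [NFAwtl.accFrom_final _ (by simp)]; simp [MC]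
  | cons x v =>
    cases x with
    | c =>
      rw [NFAwtl.accFrom_canon _ (show Al.c :: v = [] ++ Al.c :: v by simp) (by simp)
        (by simp [MC]) rfl]
      simp only [List.nil_append]
      rw [mc_true_char]
      simp
    | a =>
      have : ¬ MC.AccFrom false (Al.a :: v) :=
        NFAwtl.accFrom_stuck _ (show Al.a :: v = [] ++ Al.a :: v by simp) (by simp)
          (by simp [MC]) rfl
      simp [this]
    | b =>
      have : ¬ MC.AccFrom false (Al.b :: v) :=
        NFAwtl.accFrom_stuck _ (show Al.b :: v = [] ++ Al.b :: v by simp) (by simp)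
          (by simp [MC]) rfl
      simp [this]

/-- Machine for `Leq`. -/
def MEQ : NFAwtl (Option Bool) AB where
  τ := fun q => match q with
    | none => ∅
    | some false => {AB.a}
    | some true => {AB.b}
  I := {none}
  F := {none}
  δ := fun q x => match q, x with
    | none, AB.a => {some false}
    | none, AB.b => {some true}
    | some false, AB.b => {none}
    | some true, AB.a => {none}
    | _, _ => ∅
  tr := by rintro (_ | (_ | _)) (_ | _) h <;> first | rfl | simp_all

theorem meq_char : ∀ (n : ℕ) (w : List AB), w.length ≤ n →
    (MEQ.AccFrom none w ↔ w.count AB.a = w.count AB.b) ∧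
    (MEQ.AccFrom (some false) w ↔ w.count AB.b = w.count AB.a + 1) ∧
    (MEQ.AccFrom (some true) w ↔ w.count AB.a = w.count AB.b + 1) := by
  intro n
  induction n with
  | zero =>
    intro w hw
    have hw0 : w = [] := List.eq_nil_of_length_eq_zero (Nat.le_zero.1 hw)
    subst hw0
    refine ⟨?_, ?_, ?_⟩ <;> rw [NFAwtl.accFrom_final _ (by simp)] <;> simp [MEQ]
  | succ n ih =>
    intro w hw
    refine ⟨?_, ?_, ?_⟩
    · cases w with
      | nil => rw [NFAwtl.accFrom_final _ (by simp)]; simp [MEQ]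
      | cons x v =>
        have hvlen : v.length ≤ n := by simpa using hw
        cases x with
        | a =>
          rw [NFAwtl.accFrom_canon _ (show AB.a :: v = [] ++ AB.a :: v by simp) (by simp)
            (by simp [MEQ]) rfl]
          simp only [List.nil_append]
          rw [(ih v hvlen).2.1]
          simp [List.count_cons] <;> omega
        | b =>
          rw [NFAwtl.accFrom_canon _ (show AB.b :: v = [] ++ AB.b :: v by simp) (by simp)
            (by simp [MEQ]) rfl]
          simp only [List.nil_append]
          rw [(ih v hvlen).2.2]
          simp [List.count_cons] <;> omega
    · rcases existsSplit (fun x => x ∈ MEQ.τ (some false)) w with hall | ⟨u, x, v, hweq, hu, hx⟩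
      · rw [NFAwtl.accFrom_final _ hall]
        have h2 : AB.b ∉ w := fun hb => by simpa [MEQ] using hall AB.b hb
        simp [MEQ, List.count_eq_zero_of_not_mem h2]
      · have hulen : (u ++ v).length ≤ n := by
          have := hw
          rw [hweq] at this
          simp only [List.length_append, List.length_cons] at this ⊢
          omega
        cases x with
        | a => exact absurd (by simp [MEQ]) hx
        | b =>
          rw [NFAwtl.accFrom_canon _ hweq hu hx rfl, (ih (u ++ v) hulen).1, hweq]
          simp only [List.count_append, List.count_cons]
          simp <;> omega
    · rcases existsSplit (fun x => x ∈ MEQ.τ (some true)) w with hall | ⟨u, x, v, hweq, hu, hx⟩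
      · rw [NFAwtl.accFrom_final _ hall]
        have h2 : AB.a ∉ w := fun hb => by simpa [MEQ] using hall AB.a hb
        simp [MEQ, List.count_eq_zero_of_not_mem h2]
      · have hulen : (u ++ v).length ≤ n := by
          have := hw
          rw [hweq] at this
          simp only [List.length_append, List.length_cons] at this ⊢
          omega
        cases x with
        | b => exact absurd (by simp [MEQ]) hx
        | a =>
          rw [NFAwtl.accFrom_canon _ hweq hu hx rfl, (ih (u ++ v) hulen).1, hweq]
          simp only [List.count_append, List.count_cons]
          simp <;> omega

inductive Q4 : Type
  | r0 | rA2 | rA1 | rB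
deriving DecidableEq

instance : Fintype Q4 := ⟨{Q4.r0, Q4.rA2, Q4.rA1, Q4.rB}, fun x => by cases x <;> simp⟩

/-- Machine for `L2eq`. -/
def M2E : NFAwtl Q4 AB where
  τ := fun q => match q with
    | Q4.r0 => ∅
    | Q4.rA2 => {AB.a}
    | Q4.rA1 => {AB.a}
    | Q4.rB => {AB.b}
  I := {Q4.r0}
  F := {Q4.r0}
  δ := fun q x => match q, x with
    | Q4.r0, AB.a => {Q4.rA2}
    | Q4.r0, AB.b => {Q4.rB}
    | Q4.rA2, AB.b => {Q4.rA1}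
    | Q4.rA1, AB.b => {Q4.r0}
    | Q4.rB, AB.a => {Q4.rA1}
    | _, _ => ∅
  tr := by rintro (_ | _ | _ | _) (_ | _) h <;> first | rfl | simp_all

theorem m2e_char : ∀ (n : ℕ) (w : List AB), w.length ≤ n →
    (M2E.AccFrom Q4.r0 w ↔ 2 * w.count AB.a = w.count AB.b) ∧
    (M2E.AccFrom Q4.rA2 w ↔ 2 * w.count AB.a + 2 = w.count AB.b) ∧
    (M2E.AccFrom Q4.rA1 w ↔ 2 * w.count AB.a + 1 = w.count AB.b) ∧
    (M2E.AccFrom Q4.rB w ↔ 2 * w.count AB.a = w.count AB.b + 1) := by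
  intro n
  induction n with
  | zero =>
    intro w hw
    have hw0 : w = [] := List.eq_nil_of_length_eq_zero (Nat.le_zero.1 hw)
    subst hw0
    refine ⟨?_, ?_, ?_, ?_⟩ <;> rw [NFAwtl.accFrom_final _ (by simp)] <;> simp [M2E]
  | succ n ih =>
    intro w hw
    refine ⟨?_, ?_, ?_, ?_⟩
    · cases w with
      | nil => rw [NFAwtl.accFrom_final _ (by simp)]; simp [M2E]
      | cons x v =>
        have hvlen : v.length ≤ n := by simpa using hw
        cases x with
        | a =>
          rw [NFAwtl.accFrom_canon _ (show AB.a :: v = [] ++ AB.a :: v by simp) (by simp)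
            (by simp [M2E]) rfl]
          simp only [List.nil_append]
          rw [(ih v hvlen).2.1]
          simp [List.count_cons] <;> omega
        | b =>
          rw [NFAwtl.accFrom_canon _ (show AB.b :: v = [] ++ AB.b :: v by simp) (by simp)
            (by simp [M2E]) rfl]
          simp only [List.nil_append]
          rw [(ih v hvlen).2.2.2]
          simp [List.count_cons] <;> omega
    · rcases existsSplit (fun x => x ∈ M2E.τ Q4.rA2) w with hall | ⟨u, x, v, hweq, hu, hx⟩
      · rw [NFAwtl.accFrom_final _ hall]
        have h2 : AB.b ∉ w := fun hb => by simpa [M2E] using hall AB.b hb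
        simp [M2E, List.count_eq_zero_of_not_mem h2]
      · have hulen : (u ++ v).length ≤ n := by
          have := hw
          rw [hweq] at this
          simp only [List.length_append, List.length_cons] at this ⊢
          omega
        cases x with
        | a => exact absurd (by simp [M2E]) hx
        | b =>
          rw [NFAwtl.accFrom_canon _ hweq hu hx rfl, (ih (u ++ v) hulen).2.2.1, hweq]
          simp only [List.count_append, List.count_cons]
          simp <;> omega
    · rcases existsSplit (fun x => x ∈ M2E.τ Q4.rA1) w with hall | ⟨u, x, v, hweq, hu, hx⟩
      · rw [NFAwtl.accFrom_final _ hall]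
        have h2 : AB.b ∉ w := fun hb => by simpa [M2E] using hall AB.b hb
        simp [M2E, List.count_eq_zero_of_not_mem h2]
      · have hulen : (u ++ v).length ≤ n := by
          have := hw
          rw [hweq] at this
          simp only [List.length_append, List.length_cons] at this ⊢
          omega
        cases x with
        | a => exact absurd (by simp [M2E]) hx
        | b =>
          rw [NFAwtl.accFrom_canon _ hweq hu hx rfl, (ih (u ++ v) hulen).1, hweq]
          simp only [List.count_append, List.count_cons]
          simp <;> omega
    · rcases existsSplit (fun x => x ∈ M2E.τ Q4.rB) w with hall | ⟨u, x, v, hweq, hu, hx⟩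
      · rw [NFAwtl.accFrom_final _ hall]
        have h2 : AB.a ∉ w := fun hb => by simpa [M2E] using hall AB.a hb
        simp [M2E, List.count_eq_zero_of_not_mem h2]
      · have hulen : (u ++ v).length ≤ n := by
          have := hw
          rw [hweq] at this
          simp only [List.length_append, List.length_cons] at this ⊢
          omega
        cases x with
        | b => exact absurd (by simp [M2E]) hx
        | a =>
          rw [NFAwtl.accFrom_canon _ hweq hu hx rfl, (ih (u ++ v) hulen).2.2.1, hweq]
          simp only [List.count_append, List.count_cons]
          simp <;> omega

theorem lcr_mem : (LcR : Set (List Al)) ∈ DFAwtlLangs Al := by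
  refine ⟨Option Bool, inferInstance, mkM3 {none}, mkM3_det _ none rfl, ?_⟩
  ext w
  rw [NFAwtl.lang, Set.mem_setOf_eq, NFAwtl.accepts_iff _ rfl, m3_none_char]
  rfl

theorem lge_mem : Lge ∈ DFAwtlLangs Al := by
  refine ⟨Option Bool, inferInstance, mkM3 {some false}, mkM3_det _ _ rfl, ?_⟩
  ext w
  rw [NFAwtl.lang, Set.mem_setOf_eq, NFAwtl.accepts_iff _ rfl,
    (m3_char _ w.length w le_rfl).1]
  rfl

theorem singc_mem : ({[Al.c]} : Set (List Al)) ∈ DFAwtlLangs Al := by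
  refine ⟨Bool, inferInstance, MC, ⟨⟨false, rfl⟩, ?_⟩, ?_⟩
  · rintro (_ | _) (_ | _ | _) <;>
      first
        | exact Set.subsingleton_empty
        | exact Set.subsingleton_singleton
  · ext w
    rw [NFAwtl.lang, Set.mem_setOf_eq, NFAwtl.accepts_iff _ rfl, mc_char]
    simp

theorem leq_mem : Leq ∈ DFAwtlLangs AB := by
  refine ⟨Option Bool, inferInstance, MEQ, ⟨⟨none, rfl⟩, ?_⟩, ?_⟩
  · rintro (_ | (_ | _)) (_ | _) <;>
      first
        | exact Set.subsingleton_empty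
        | exact Set.subsingleton_singleton
  · ext w
    rw [NFAwtl.lang, Set.mem_setOf_eq, NFAwtl.accepts_iff _ rfl,
      (meq_char w.length w le_rfl).1]
    rfl

theorem l2eq_mem : L2eq ∈ DFAwtlLangs AB := by
  refine ⟨Q4, inferInstance, M2E, ⟨⟨Q4.r0, rfl⟩, ?_⟩, ?_⟩
  · rintro (_ | _ | _ | _) (_ | _) <;>
      first
        | exact Set.subsingleton_empty
        | exact Set.subsingleton_singleton
  · ext w
    rw [NFAwtl.lang, Set.mem_setOf_eq, NFAwtl.accepts_iff _ rfl,
      (m2e_char w.length w le_rfl).1]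
    rfl
namespace RNFAwtl

variable {Q α : Type} (A : RNFAwtl Q α)

def Accepting (c : Q × List α) : Prop := (∀ x ∈ c.2, x ∈ A.τ c.1) ∧ c.1 ∈ A.Facc

def AccFrom (q : Q) (w : List α) : Prop :=
  ∃ q' w', Relation.ReflTransGen A.Step (q, w) (q', w') ∧
    (∀ x ∈ w', x ∈ A.τ q') ∧ q' ∈ A.Facc

theorem accepts_iff {q₀ : Q} (h : A.I = {q₀}) (w : List α) :
    A.Accepts w ↔ A.AccFrom q₀ w := by
  constructor
  · rintro ⟨q', hq', rest⟩
    rw [h, Set.mem_singleton_iff] at hq'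
    subst hq'
    exact rest
  · intro hw
    exact ⟨q₀, by rw [h]; rfl, hw⟩

theorem accFrom_of_rtg {q : Q} {w : List α} {X : Q × List α}
    (h : Relation.ReflTransGen A.Step (q, w) X) (hX : A.Accepting X) :
    A.AccFrom q w :=
  ⟨X.1, X.2, h, hX.1, hX.2⟩

variable {A}

theorem step_fun (hdet : A.Deterministic) {c d e : Q × List α}
    (hd : A.Step c d) (he : A.Step c e) : d = e := by
  obtain ⟨-, hδ, hend⟩ := hdet
  rcases hd with ⟨u, x, v, hw, hu, hx, h1, h2⟩ | ⟨ht, h1, h2⟩ <;>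
    rcases he with ⟨u', x', v', hw', hu', hx', g1, g2⟩ | ⟨gt, g1, g2⟩
  · obtain ⟨rfl, rfl, rfl⟩ := decompUnique (hw.symm.trans hw') hu hx hu' hx'
    exact Prod.ext (hδ _ _ h1 g1) (h2.trans g2.symm)
  · exact absurd (gt x (by rw [hw]; simp)) hx
  · exact absurd (ht x' (by rw [hw']; simp)) hx'
  · exact Prod.ext (hend _ h1 g1) (h2.trans g2.symm)

theorem accepting_terminal {c d : Q × List α} (h : A.Accepting c) (hd : A.Step c d) :
    False := by
  rcases hd with ⟨u, x, v, hw, hu, hx, h1, h2⟩ | ⟨ht, h1, h2⟩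
  · exact hx (h.1 x (by rw [hw]; simp))
  · rw [A.accEnd c.1 h.2] at h1
    exact h1

theorem terminal_rtg_eq {c d : Q × List α} (hterm : ∀ e, ¬ A.Step c e)
    (h : Relation.ReflTransGen A.Step c d) : c = d := by
  rcases h.cases_head with heq | ⟨e, hstep, _⟩
  · exact heq
  · exact absurd hstep (hterm e)

theorem rtg_comparable (hdet : A.Deterministic) {c d e : Q × List α}
    (hd : Relation.ReflTransGen A.Step c d) (he : Relation.ReflTransGen A.Step c e) :
    Relation.ReflTransGen A.Step d e ∨ Relation.ReflTransGen A.Step e d := by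
  induction hd using Relation.ReflTransGen.head_induction_on generalizing e with
  | refl => exact Or.inl he
  | head hstep hrest ih =>
    rcases he.cases_head with heq | ⟨m, hm, hrest'⟩
    · subst heq
      exact Or.inr (Relation.ReflTransGen.head hstep hrest)
    · exact ih (step_fun hdet hstep hm ▸ hrest')

theorem transfer (hdet : A.Deterministic) {q₀ : Q} {w₁ w₂ : List α} {X : Q × List α}
    (h1 : Relation.ReflTransGen A.Step (q₀, w₁) X)
    (h2 : Relation.ReflTransGen A.Step (q₀, w₂) X)
    (hacc : A.AccFrom q₀ w₁) : A.AccFrom q₀ w₂ := by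
  obtain ⟨q', w', hrtg, ht, hf⟩ := hacc
  have hXF : Relation.ReflTransGen A.Step X (q', w') := by
    rcases rtg_comparable hdet h1 hrtg with h | h
    · exact h
    · have : (q', w') = X :=
        terminal_rtg_eq (fun e he => accepting_terminal ⟨ht, hf⟩ he) h
      rw [this]
    
  exact ⟨q', w', h2.trans hXF, ht, hf⟩

theorem reject_of_stuck (hdet : A.Deterministic) {q₀ : Q} {w : List α} {X : Q × List α}
    (h1 : Relation.ReflTransGen A.Step (q₀, w) X)
    (hterm : ∀ d, ¬ A.Step X d) (hnacc : ¬ A.Accepting X) : ¬ A.AccFrom q₀ w := by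
  rintro ⟨q', w', hrtg, ht, hf⟩
  rcases rtg_comparable hdet h1 hrtg with h | h
  · have := terminal_rtg_eq hterm h
    exact hnacc (this ▸ ⟨ht, hf⟩)
  · have : (q', w') = X :=
      terminal_rtg_eq (fun e he => accepting_terminal ⟨ht, hf⟩ he) h
    exact hnacc (this ▸ ⟨ht, hf⟩)

theorem reject_of_cycle (hdet : A.Deterministic) {q₀ : Q} {w : List α} {X Y : Q × List α}
    (h1 : Relation.ReflTransGen A.Step (q₀, w) X)
    (hstep : A.Step X Y) (hret : Relation.ReflTransGen A.Step Y X)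
    (hnacc : ¬ A.Accepting X) : ¬ A.AccFrom q₀ w := by
  rintro ⟨q', w', hrtg, ht, hf⟩
  have haccF : A.Accepting (q', w') := ⟨ht, hf⟩
  rcases rtg_comparable hdet h1 hrtg with h | h
  · -- F reachable from X; show everything reachable from X can return to X
    have closed : ∀ Z W : Q × List α, Relation.ReflTransGen A.Step Z X → A.Step Z W →
        Relation.ReflTransGen A.Step W X := by
      intro Z W hZ hZW
      rcases hZ.cases_head with heq | ⟨m, hm, hrest⟩
      · subst heq
        exact (step_fun hdet hstep hZW) ▸ hret
      · exact (step_fun hdet hm hZW) ▸ hrest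
    have key : ∀ F : Q × List α, Relation.ReflTransGen A.Step X F →
        Relation.ReflTransGen A.Step F X := by
      intro F hF
      induction hF with
      | refl => exact Relation.ReflTransGen.refl
      | tail hxb hbF ih => exact closed _ _ ih hbF
    rcases (key _ h).cases_head with heq | ⟨m, hm, _⟩
    · exact hnacc (heq ▸ haccF)
    · exact accepting_terminal haccF hm
  · have : (q', w') = X :=
      terminal_rtg_eq (fun e he => accepting_terminal haccF he) h
    exact hnacc (this ▸ haccF)

end RNFAwtl
/-! ### Generic run machinery for RNFAwtls over the alphabet `Al` -/

open Classical in
noncomputable def pick {γ : Type*} (S : Set γ) : Option γ :=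
  if h : S.Nonempty then some h.choose else none

theorem pick_eq_some {γ : Type*} {S : Set γ} {x : γ} (h : pick S = some x) : x ∈ S := by
  by_cases h' : S.Nonempty
  · unfold pick at h
    rw [dif_pos h'] at h
    obtain rfl : h'.choose = x := by injection h
    exact h'.choose_spec
  · unfold pick at h
    rw [dif_neg h'] at h
    exact absurd h (by simp)

theorem pick_eq_none {γ : Type*} {S : Set γ} (h : pick S = none) : S = ∅ := by
  by_cases h' : S.Nonempty
  · unfold pick at h
    rw [dif_pos h'] at h
    exact absurd h (by simp)
  · exact Set.not_nonempty_iff_eq_empty.1 h'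

theorem pick_ne_none {γ : Type*} {S : Set γ} (h : S ≠ ∅) : ∃ x, pick S = some x ∧ x ∈ S := by
  have h' : S.Nonempty := Set.nonempty_iff_ne_empty.2 h
  refine ⟨h'.choose, ?_, h'.choose_spec⟩
  unfold pick
  exact dif_pos h'

inductive GEv : Type
  | A | B | C0 | C | E
deriving DecidableEq

open Classical in
/-- The generic next-step function: state × (front marker still present?). -/
noncomputable def gnext {Q : Type} (A : RNFAwtl Q Al) (s : Q × Bool) :
    Option (GEv × Q × Bool) :=
  if s.2 = true ∧ Al.c ∉ A.τ s.1 then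
    (pick (A.δ s.1 Al.c)).map (fun q => (GEv.C0, q, false))
  else if Al.a ∉ A.τ s.1 then (pick (A.δ s.1 Al.a)).map (fun q => (GEv.A, q, s.2))
  else if Al.b ∉ A.τ s.1 then (pick (A.δ s.1 Al.b)).map (fun q => (GEv.B, q, s.2))
  else if Al.c ∉ A.τ s.1 then (pick (A.δ s.1 Al.c)).map (fun q => (GEv.C, q, s.2))
  else if s.1 ∈ A.Facc then none
  else (pick (A.δend s.1)).map (fun q => (GEv.E, q, s.2))

theorem gnext_inv {Q : Type} {A : RNFAwtl Q Al} {s s' : Q × Bool} {e : GEv}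
    (h : gnext A s = some (e, s')) :
    (e = GEv.C0 ∧ s.2 = true ∧ Al.c ∉ A.τ s.1 ∧ s'.1 ∈ A.δ s.1 Al.c ∧ s'.2 = false) ∨
    (e = GEv.A ∧ (s.2 = true → Al.c ∈ A.τ s.1) ∧ Al.a ∉ A.τ s.1 ∧
      s'.1 ∈ A.δ s.1 Al.a ∧ s'.2 = s.2) ∨
    (e = GEv.B ∧ (s.2 = true → Al.c ∈ A.τ s.1) ∧ Al.a ∈ A.τ s.1 ∧ Al.b ∉ A.τ s.1 ∧
      s'.1 ∈ A.δ s.1 Al.b ∧ s'.2 = s.2) ∨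
    (e = GEv.C ∧ s.2 = false ∧ Al.a ∈ A.τ s.1 ∧ Al.b ∈ A.τ s.1 ∧ Al.c ∉ A.τ s.1 ∧
      s'.1 ∈ A.δ s.1 Al.c ∧ s'.2 = s.2) ∨
    (e = GEv.E ∧ Al.a ∈ A.τ s.1 ∧ Al.b ∈ A.τ s.1 ∧ Al.c ∈ A.τ s.1 ∧ s.1 ∉ A.Facc ∧
      s'.1 ∈ A.δend s.1 ∧ s'.2 = s.2) := by
  unfold gnext at h
  by_cases h1 : s.2 = true ∧ Al.c ∉ A.τ s.1
  · rw [if_pos h1, Option.map_eq_some_iff] at h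
    obtain ⟨q, hq, heq⟩ := h
    cases heq
    exact Or.inl ⟨rfl, h1.1, h1.2, pick_eq_some hq, rfl⟩
  rw [if_neg h1] at h
  have hfc : s.2 = true → Al.c ∈ A.τ s.1 := fun hs2 => not_not.1 fun hc => h1 ⟨hs2, hc⟩
  by_cases h2 : Al.a ∉ A.τ s.1
  · rw [if_pos h2, Option.map_eq_some_iff] at h
    obtain ⟨q, hq, heq⟩ := h
    cases heq
    exact Or.inr (Or.inl ⟨rfl, hfc, h2, pick_eq_some hq, rfl⟩)
  rw [if_neg h2] at h
  by_cases h3 : Al.b ∉ A.τ s.1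
  · rw [if_pos h3, Option.map_eq_some_iff] at h
    obtain ⟨q, hq, heq⟩ := h
    cases heq
    exact Or.inr (Or.inr (Or.inl ⟨rfl, hfc, not_not.1 h2, h3, pick_eq_some hq, rfl⟩))
  rw [if_neg h3] at h
  by_cases h4 : Al.c ∉ A.τ s.1
  · rw [if_pos h4, Option.map_eq_some_iff] at h
    obtain ⟨q, hq, heq⟩ := h
    cases heq
    have hs2 : s.2 = false := by
      by_contra hs2
      rw [Bool.not_eq_false] at hs2
      exact h1 ⟨hs2, h4⟩
    exact Or.inr (Or.inr (Or.inr (Or.inl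
      ⟨rfl, hs2, not_not.1 h2, not_not.1 h3, h4, pick_eq_some hq, rfl⟩)))
  rw [if_neg h4] at h
  by_cases h5 : s.1 ∈ A.Facc
  · rw [if_pos h5] at h
    cases h
  · rw [if_neg h5, Option.map_eq_some_iff] at h
    obtain ⟨q, hq, heq⟩ := h
    cases heq
    exact Or.inr (Or.inr (Or.inr (Or.inr
      ⟨rfl, not_not.1 h2, not_not.1 h3, not_not.1 h4, h5, pick_eq_some hq, rfl⟩)))

theorem gnext_none_inv {Q : Type} {A : RNFAwtl Q Al} {s : Q × Bool}
    (h : gnext A s = none) :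
    (s.2 = true ∧ Al.c ∉ A.τ s.1 ∧ A.δ s.1 Al.c = ∅) ∨
    ((s.2 = true → Al.c ∈ A.τ s.1) ∧ Al.a ∉ A.τ s.1 ∧ A.δ s.1 Al.a = ∅) ∨
    ((s.2 = true → Al.c ∈ A.τ s.1) ∧ Al.a ∈ A.τ s.1 ∧ Al.b ∉ A.τ s.1 ∧
      A.δ s.1 Al.b = ∅) ∨
    (s.2 = false ∧ Al.a ∈ A.τ s.1 ∧ Al.b ∈ A.τ s.1 ∧ Al.c ∉ A.τ s.1 ∧
      A.δ s.1 Al.c = ∅) ∨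
    (Al.a ∈ A.τ s.1 ∧ Al.b ∈ A.τ s.1 ∧ Al.c ∈ A.τ s.1 ∧ s.1 ∈ A.Facc) ∨
    (Al.a ∈ A.τ s.1 ∧ Al.b ∈ A.τ s.1 ∧ Al.c ∈ A.τ s.1 ∧ s.1 ∉ A.Facc ∧
      A.δend s.1 = ∅) := by
  unfold gnext at h
  by_cases h1 : s.2 = true ∧ Al.c ∉ A.τ s.1
  · rw [if_pos h1, Option.map_eq_none_iff] at h
    exact Or.inl ⟨h1.1, h1.2, pick_eq_none h⟩
  rw [if_neg h1] at h
  have hfc : s.2 = true → Al.c ∈ A.τ s.1 := fun hs2 => not_not.1 fun hc => h1 ⟨hs2, hc⟩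
  by_cases h2 : Al.a ∉ A.τ s.1
  · rw [if_pos h2, Option.map_eq_none_iff] at h
    exact Or.inr (Or.inl ⟨hfc, h2, pick_eq_none h⟩)
  rw [if_neg h2] at h
  by_cases h3 : Al.b ∉ A.τ s.1
  · rw [if_pos h3, Option.map_eq_none_iff] at h
    exact Or.inr (Or.inr (Or.inl ⟨hfc, not_not.1 h2, h3, pick_eq_none h⟩))
  rw [if_neg h3] at h
  by_cases h4 : Al.c ∉ A.τ s.1
  · rw [if_pos h4, Option.map_eq_none_iff] at h
    have hs2 : s.2 = false := by
      by_contra hs2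
      rw [Bool.not_eq_false] at hs2
      exact h1 ⟨hs2, h4⟩
    exact Or.inr (Or.inr (Or.inr (Or.inl
      ⟨hs2, not_not.1 h2, not_not.1 h3, h4, pick_eq_none h⟩)))
  rw [if_neg h4] at h
  by_cases h5 : s.1 ∈ A.Facc
  · exact Or.inr (Or.inr (Or.inr (Or.inr (Or.inl
      ⟨not_not.1 h2, not_not.1 h3, not_not.1 h4, h5⟩))))
  · rw [if_neg h5, Option.map_eq_none_iff] at h
    exact Or.inr (Or.inr (Or.inr (Or.inr (Or.inr
      ⟨not_not.1 h2, not_not.1 h3, not_not.1 h4, h5, pick_eq_none h⟩))))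

section AlCore

variable {Q : Type} (A : RNFAwtl Q Al) (q0 : Q) (fr : Bool)

noncomputable def gs : ℕ → Q × Bool
  | 0 => (q0, fr)
  | t + 1 =>
    match gnext A (gs t) with
    | some (_, s') => s'
    | none => gs t

noncomputable def gev (t : ℕ) : Option GEv := (gnext A (gs A q0 fr t)).map Prod.fst

noncomputable def cA : ℕ → ℕ
  | 0 => 0
  | t + 1 => cA t + (if gev A q0 fr t = some GEv.A then 1 else 0)

noncomputable def cB : ℕ → ℕ
  | 0 => 0
  | t + 1 => cB t + (if gev A q0 fr t = some GEv.B then 1 else 0)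

variable {A q0 fr}

theorem gs_succ {t : ℕ} {e : GEv} {s' : Q × Bool} (h : gnext A (gs A q0 fr t) = some (e, s')) :
    gs A q0 fr (t + 1) = s' := by
  show (match gnext A (gs A q0 fr t) with
    | some (_, s') => s'
    | none => gs A q0 fr t) = s'
  rw [h]

theorem gev_some {t : ℕ} {e : GEv} {s' : Q × Bool}
    (h : gnext A (gs A q0 fr t) = some (e, s')) : gev A q0 fr t = some e := by
  unfold gev
  rw [h]
  rfl

theorem gev_elim {t : ℕ} {e : GEv} (h : gev A q0 fr t = some e) :
    ∃ s', gnext A (gs A q0 fr t) = some (e, s') := by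
  unfold gev at h
  rw [Option.map_eq_some_iff] at h
  obtain ⟨⟨e', s'⟩, h1, h2⟩ := h
  cases h2
  exact ⟨s', h1⟩

theorem cA_succ (t : ℕ) :
    cA A q0 fr (t + 1) = cA A q0 fr t + (if gev A q0 fr t = some GEv.A then 1 else 0) := rfl

theorem cB_succ (t : ℕ) :
    cB A q0 fr (t + 1) = cB A q0 fr t + (if gev A q0 fr t = some GEv.B then 1 else 0) := rfl

theorem cA_mono {t t' : ℕ} (h : t ≤ t') : cA A q0 fr t ≤ cA A q0 fr t' := by
  induction t' with
  | zero => simpa [Nat.le_zero.1 h]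
  | succ n ih =>
    rcases Nat.lt_or_ge t (n + 1) with h' | h'
    · refine le_trans (ih (Nat.lt_succ_iff.1 h')) ?_
      rw [cA_succ]
      split_ifs <;> omega
    · have : t = n + 1 := le_antisymm h h'
      rw [this]

theorem cB_mono {t t' : ℕ} (h : t ≤ t') : cB A q0 fr t ≤ cB A q0 fr t' := by
  induction t' with
  | zero => simpa [Nat.le_zero.1 h]
  | succ n ih =>
    rcases Nat.lt_or_ge t (n + 1) with h' | h'
    · refine le_trans (ih (Nat.lt_succ_iff.1 h')) ?_
      rw [cB_succ]
      split_ifs <;> omega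
    · have : t = n + 1 := le_antisymm h h'
      rw [this]

theorem cA_le_self (t : ℕ) : cA A q0 fr t ≤ t := by
  induction t with
  | zero => exact le_rfl
  | succ n ih =>
    rw [cA_succ]
    split_ifs <;> omega

theorem cB_le_self (t : ℕ) : cB A q0 fr t ≤ t := by
  induction t with
  | zero => exact le_rfl
  | succ n ih =>
    rw [cB_succ]
    split_ifs <;> omega

theorem cA_lt {t t' : ℕ} (h : t' < t) (he : gev A q0 fr t' = some GEv.A) :
    cA A q0 fr t' < cA A q0 fr t := by
  have h1 : cA A q0 fr (t' + 1) = cA A q0 fr t' + 1 := by rw [cA_succ, if_pos he]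
  have h2 : cA A q0 fr (t' + 1) ≤ cA A q0 fr t :=
    cA_mono (show t' + 1 ≤ t from h)
  omega

theorem cB_lt {t t' : ℕ} (h : t' < t) (he : gev A q0 fr t' = some GEv.B) :
    cB A q0 fr t' < cB A q0 fr t := by
  have h1 : cB A q0 fr (t' + 1) = cB A q0 fr t' + 1 := by rw [cB_succ, if_pos he]
  have h2 : cB A q0 fr (t' + 1) ≤ cB A q0 fr t :=
    cB_mono (show t' + 1 ≤ t from h)
  omega

end AlCore

/-- The word shapes tracked through generic runs. -/
def shape (fl : Bool) (i k : ℕ) (Z : List Al) : List Al :=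
  (cond fl [Al.c] []) ++ (List.replicate i Al.a ++ (List.replicate k Al.b ++ (Al.c :: Z)))

/-- Word shape with the inner `c` before the `b`s. -/
def shape2 (fl : Bool) (i m : ℕ) : List Al :=
  (cond fl [Al.c] []) ++ (List.replicate i Al.a ++ (Al.c :: List.replicate m Al.b))

theorem shape_all_mem {fl : Bool} {i k : ℕ} {Z : List Al} (hZ : Al.c ∉ Z) :
    ∀ x ∈ shape fl i k Z, x = Al.a ∨ x = Al.b ∨ x = Al.c := by
  intro x _
  cases x
  · exact Or.inl rfl
  · exact Or.inr (Or.inl rfl)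
  · exact Or.inr (Or.inr rfl)
section AlCore2

variable {Q : Type} {A : RNFAwtl Q Al} {q0 : Q} {fr : Bool}

@[simp] theorem gs_zero : gs A q0 fr 0 = (q0, fr) := rfl
@[simp] theorem cA_zero : cA A q0 fr 0 = 0 := rfl
@[simp] theorem cB_zero : cB A q0 fr 0 = 0 := rfl

theorem front_transl {q : Q} {fl : Bool} (hc : fl = true → Al.c ∈ A.τ q) :
    ∀ y ∈ (cond fl [Al.c] []), y ∈ A.τ q := by
  cases fl
  · simp
  · simpa using hc rfl

theorem stepA {t i k : ℕ} {Z : List Al} {s' : Q × Bool}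
    (h : gnext A (gs A q0 fr t) = some (GEv.A, s')) (hi : 1 ≤ i) :
    A.Step ((gs A q0 fr t).1, shape (gs A q0 fr t).2 i k Z)
      (s'.1, shape s'.2 (i - 1) k Z) := by
  rcases gnext_inv h with ⟨he, -⟩ | ⟨-, hfc, hx, hδ, hfl⟩ | ⟨he, -⟩ | ⟨he, -⟩ | ⟨he, -⟩ <;>
    try exact absurd he (by simp)
  obtain ⟨j, rfl⟩ : ∃ j, i = j + 1 := ⟨i - 1, by omega⟩
  refine Or.inl ⟨cond (gs A q0 fr t).2 [Al.c] [], Al.a,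
    List.replicate j Al.a ++ (List.replicate k Al.b ++ (Al.c :: Z)), ?_,
    front_transl hfc, hx, hδ, ?_⟩
  · show shape (gs A q0 fr t).2 (j + 1) k Z = _
    simp [shape, List.replicate_succ]
  · show shape s'.2 (j + 1 - 1) k Z = _
    rw [hfl]
    simp [shape]

theorem stepB {t i k : ℕ} {Z : List Al} {s' : Q × Bool}
    (h : gnext A (gs A q0 fr t) = some (GEv.B, s')) (hk : 1 ≤ k) :
    A.Step ((gs A q0 fr t).1, shape (gs A q0 fr t).2 i k Z)
      (s'.1, shape s'.2 i (k - 1) Z) := by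
  rcases gnext_inv h with ⟨he, -⟩ | ⟨he, -⟩ | ⟨-, hfc, ha, hx, hδ, hfl⟩ | ⟨he, -⟩ |
      ⟨he, -⟩ <;>
    try exact absurd he (by simp)
  obtain ⟨j, rfl⟩ : ∃ j, k = j + 1 := ⟨k - 1, by omega⟩
  refine Or.inl ⟨cond (gs A q0 fr t).2 [Al.c] [] ++ List.replicate i Al.a, Al.b,
    List.replicate j Al.b ++ (Al.c :: Z), ?_, ?_, hx, hδ, ?_⟩
  · show shape (gs A q0 fr t).2 i (j + 1) Z = _
    simp [shape, List.replicate_succ]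
  · intro y hy
    rcases List.mem_append.1 hy with hy | hy
    · exact front_transl hfc y hy
    · rw [List.eq_of_mem_replicate hy]
      exact ha
  · show shape s'.2 i (j + 1 - 1) Z = _
    rw [hfl]
    simp [shape]

theorem stepC0 {t i k : ℕ} {Z : List Al} {s' : Q × Bool}
    (h : gnext A (gs A q0 fr t) = some (GEv.C0, s')) :
    A.Step ((gs A q0 fr t).1, shape (gs A q0 fr t).2 i k Z)
      (s'.1, shape s'.2 i k Z) := by
  rcases gnext_inv h with ⟨-, hfl, hx, hδ, hfl'⟩ | ⟨he, -⟩ | ⟨he, -⟩ | ⟨he, -⟩ |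
      ⟨he, -⟩ <;>
    try exact absurd he (by simp)
  refine Or.inl ⟨[], Al.c,
    List.replicate i Al.a ++ (List.replicate k Al.b ++ (Al.c :: Z)), ?_, by simp, hx, hδ, ?_⟩
  · show shape (gs A q0 fr t).2 i k Z = _
    rw [shape, hfl]
    simp
  · show shape s'.2 i k Z = _
    rw [shape, hfl']
    simp

theorem stepE {t i k : ℕ} {Z : List Al} (hZ : Al.c ∉ Z) {s' : Q × Bool}
    (h : gnext A (gs A q0 fr t) = some (GEv.E, s')) :
    A.Step ((gs A q0 fr t).1, shape (gs A q0 fr t).2 i k Z)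
      (s'.1, shape s'.2 i k Z) := by
  rcases gnext_inv h with ⟨he, -⟩ | ⟨he, -⟩ | ⟨he, -⟩ | ⟨he, -⟩ |
      ⟨-, ha, hb, hc, -, hδ, hfl⟩ <;>
    try exact absurd he (by simp)
  refine Or.inr ⟨?_, hδ, by rw [hfl]⟩
  intro x _
  cases x
  · exact ha
  · exact hb
  · exact hc

/-- The master synchronization lemma for `shape` words. -/
theorem S1 {i k : ℕ} {Z : List Al} (hZ : Al.c ∉ Z) (t : ℕ)
    (h : ∀ t' < t, ∃ e s', gnext A (gs A q0 fr t') = some (e, s') ∧ e ≠ GEv.C ∧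
      (e = GEv.A → cA A q0 fr t' < i) ∧ (e = GEv.B → cB A q0 fr t' < k)) :
    Relation.ReflTransGen A.Step (q0, shape fr i k Z)
      ((gs A q0 fr t).1,
        shape (gs A q0 fr t).2 (i - cA A q0 fr t) (k - cB A q0 fr t) Z) := by
  induction t with
  | zero =>
    simp only [gs_zero, cA_zero, cB_zero, Nat.sub_zero]
    exact Relation.ReflTransGen.refl
  | succ t ih =>
    obtain ⟨e, s', hsome, hnc, hA, hB⟩ := h t (Nat.lt_succ_self t)
    have IH := ih (fun t' ht' => h t' (Nat.lt_succ_of_lt ht'))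
    have e1 : gs A q0 fr (t + 1) = s' := gs_succ hsome
    have hev : gev A q0 fr t = some e := gev_some hsome
    cases e with
    | A =>
      have e2 : cA A q0 fr (t + 1) = cA A q0 fr t + 1 := by
        rw [cA_succ, if_pos hev]
      have e3 : cB A q0 fr (t + 1) = cB A q0 fr t := by
        rw [cB_succ, if_neg (by rw [hev]; simp), Nat.add_zero]
      rw [e1, e2, e3, ← Nat.sub_sub]
      exact IH.tail (stepA hsome (by have := hA rfl; omega))
    | B =>
      have e2 : cA A q0 fr (t + 1) = cA A q0 fr t := by
        rw [cA_succ, if_neg (by rw [hev]; simp), Nat.add_zero]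
      have e3 : cB A q0 fr (t + 1) = cB A q0 fr t + 1 := by
        rw [cB_succ, if_pos hev]
      rw [e1, e2, e3, ← Nat.sub_sub]
      exact IH.tail (stepB hsome (by have := hB rfl; omega))
    | C0 =>
      have e2 : cA A q0 fr (t + 1) = cA A q0 fr t := by
        rw [cA_succ, if_neg (by rw [hev]; simp), Nat.add_zero]
      have e3 : cB A q0 fr (t + 1) = cB A q0 fr t := by
        rw [cB_succ, if_neg (by rw [hev]; simp), Nat.add_zero]
      rw [e1, e2, e3]
      exact IH.tail (stepC0 hsome)
    | C => exact absurd rfl hnc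
    | E =>
      have e2 : cA A q0 fr (t + 1) = cA A q0 fr t := by
        rw [cA_succ, if_neg (by rw [hev]; simp), Nat.add_zero]
      have e3 : cB A q0 fr (t + 1) = cB A q0 fr t := by
        rw [cB_succ, if_neg (by rw [hev]; simp), Nat.add_zero]
      rw [e1, e2, e3]
      exact IH.tail (stepE hZ hsome)

theorem stepA2 {t i m : ℕ} {s' : Q × Bool}
    (h : gnext A (gs A q0 fr t) = some (GEv.A, s')) (hi : 1 ≤ i) :
    A.Step ((gs A q0 fr t).1, shape2 (gs A q0 fr t).2 i m)
      (s'.1, shape2 s'.2 (i - 1) m) := by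
  rcases gnext_inv h with ⟨he, -⟩ | ⟨-, hfc, hx, hδ, hfl⟩ | ⟨he, -⟩ | ⟨he, -⟩ | ⟨he, -⟩ <;>
    try exact absurd he (by simp)
  obtain ⟨j, rfl⟩ : ∃ j, i = j + 1 := ⟨i - 1, by omega⟩
  refine Or.inl ⟨cond (gs A q0 fr t).2 [Al.c] [], Al.a,
    List.replicate j Al.a ++ (Al.c :: List.replicate m Al.b), ?_,
    front_transl hfc, hx, hδ, ?_⟩
  · show shape2 (gs A q0 fr t).2 (j + 1) m = _
    simp [shape2, List.replicate_succ]
  · show shape2 s'.2 (j + 1 - 1) m = _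
    rw [hfl]
    simp [shape2]

theorem stepB2 {t i m : ℕ} {s' : Q × Bool}
    (h : gnext A (gs A q0 fr t) = some (GEv.B, s')) (hm : 1 ≤ m)
    (hcτ : Al.c ∈ A.τ (gs A q0 fr t).1) :
    A.Step ((gs A q0 fr t).1, shape2 (gs A q0 fr t).2 i m)
      (s'.1, shape2 s'.2 i (m - 1)) := by
  rcases gnext_inv h with ⟨he, -⟩ | ⟨he, -⟩ | ⟨-, hfc, ha, hx, hδ, hfl⟩ | ⟨he, -⟩ |
      ⟨he, -⟩ <;>
    try exact absurd he (by simp)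
  obtain ⟨j, rfl⟩ : ∃ j, m = j + 1 := ⟨m - 1, by omega⟩
  refine Or.inl ⟨cond (gs A q0 fr t).2 [Al.c] [] ++ (List.replicate i Al.a ++ [Al.c]), Al.b,
    List.replicate j Al.b, ?_, ?_, hx, hδ, ?_⟩
  · show shape2 (gs A q0 fr t).2 i (j + 1) = _
    simp [shape2, List.replicate_succ]
  · intro y hy
    rcases List.mem_append.1 hy with hy | hy
    · exact front_transl hfc y hy
    · rcases List.mem_append.1 hy with hy | hy
      · rw [List.eq_of_mem_replicate hy]
        exact ha
      · rw [List.mem_singleton.1 hy]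
        exact hcτ
  · show shape2 s'.2 i (j + 1 - 1) = _
    rw [hfl]
    simp [shape2]

theorem stepC02 {t i m : ℕ} {s' : Q × Bool}
    (h : gnext A (gs A q0 fr t) = some (GEv.C0, s')) :
    A.Step ((gs A q0 fr t).1, shape2 (gs A q0 fr t).2 i m)
      (s'.1, shape2 s'.2 i m) := by
  rcases gnext_inv h with ⟨-, hfl, hx, hδ, hfl'⟩ | ⟨he, -⟩ | ⟨he, -⟩ | ⟨he, -⟩ |
      ⟨he, -⟩ <;>
    try exact absurd he (by simp)
  refine Or.inl ⟨[], Al.c,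
    List.replicate i Al.a ++ (Al.c :: List.replicate m Al.b), ?_, by simp, hx, hδ, ?_⟩
  · show shape2 (gs A q0 fr t).2 i m = _
    rw [shape2, hfl]
    simp
  · show shape2 s'.2 i m = _
    rw [shape2, hfl']
    simp

theorem stepE2 {t i m : ℕ} {s' : Q × Bool}
    (h : gnext A (gs A q0 fr t) = some (GEv.E, s')) :
    A.Step ((gs A q0 fr t).1, shape2 (gs A q0 fr t).2 i m)
      (s'.1, shape2 s'.2 i m) := by
  rcases gnext_inv h with ⟨he, -⟩ | ⟨he, -⟩ | ⟨he, -⟩ | ⟨he, -⟩ |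
      ⟨-, ha, hb, hc, -, hδ, hfl⟩ <;>
    try exact absurd he (by simp)
  refine Or.inr ⟨?_, hδ, by rw [hfl]⟩
  intro x _
  cases x
  · exact ha
  · exact hb
  · exact hc

/-- Synchronization lemma for `shape2` words. -/
theorem S1' {i m : ℕ} (t : ℕ)
    (h : ∀ t' < t, ∃ e s', gnext A (gs A q0 fr t') = some (e, s') ∧ e ≠ GEv.C ∧
      (e = GEv.A → cA A q0 fr t' < i) ∧
      (e = GEv.B → cB A q0 fr t' < m ∧ Al.c ∈ A.τ (gs A q0 fr t').1)) :
    Relation.ReflTransGen A.Step (q0, shape2 fr i m)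
      ((gs A q0 fr t).1,
        shape2 (gs A q0 fr t).2 (i - cA A q0 fr t) (m - cB A q0 fr t)) := by
  induction t with
  | zero =>
    simp only [gs_zero, cA_zero, cB_zero, Nat.sub_zero]
    exact Relation.ReflTransGen.refl
  | succ t ih =>
    obtain ⟨e, s', hsome, hnc, hA, hB⟩ := h t (Nat.lt_succ_self t)
    have IH := ih (fun t' ht' => h t' (Nat.lt_succ_of_lt ht'))
    have e1 : gs A q0 fr (t + 1) = s' := gs_succ hsome
    have hev : gev A q0 fr t = some e := gev_some hsome
    cases e with
    | A =>
      have e2 : cA A q0 fr (t + 1) = cA A q0 fr t + 1 := by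
        rw [cA_succ, if_pos hev]
      have e3 : cB A q0 fr (t + 1) = cB A q0 fr t := by
        rw [cB_succ, if_neg (by rw [hev]; simp), Nat.add_zero]
      rw [e1, e2, e3, ← Nat.sub_sub]
      exact IH.tail (stepA2 hsome (by have := hA rfl; omega))
    | B =>
      have e2 : cA A q0 fr (t + 1) = cA A q0 fr t := by
        rw [cA_succ, if_neg (by rw [hev]; simp), Nat.add_zero]
      have e3 : cB A q0 fr (t + 1) = cB A q0 fr t + 1 := by
        rw [cB_succ, if_pos hev]
      rw [e1, e2, e3, ← Nat.sub_sub]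
      exact IH.tail (stepB2 hsome (by have := (hB rfl).1; omega) (hB rfl).2)
    | C0 =>
      have e2 : cA A q0 fr (t + 1) = cA A q0 fr t := by
        rw [cA_succ, if_neg (by rw [hev]; simp), Nat.add_zero]
      have e3 : cB A q0 fr (t + 1) = cB A q0 fr t := by
        rw [cB_succ, if_neg (by rw [hev]; simp), Nat.add_zero]
      rw [e1, e2, e3]
      exact IH.tail (stepC02 hsome)
    | C => exact absurd rfl hnc
    | E =>
      have e2 : cA A q0 fr (t + 1) = cA A q0 fr t := by
        rw [cA_succ, if_neg (by rw [hev]; simp), Nat.add_zero]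
      have e3 : cB A q0 fr (t + 1) = cB A q0 fr t := by
        rw [cB_succ, if_neg (by rw [hev]; simp), Nat.add_zero]
      rw [e1, e2, e3]
      exact IH.tail (stepE2 hsome)

end AlCore2
section GenHelpers

variable {Q α : Type} {A : RNFAwtl Q α}

theorem no_step_canon {q : Q} {w u₀ : List α} {x₀ : α} {v₀ : List α}
    (hw : w = u₀ ++ x₀ :: v₀) (hu : ∀ y ∈ u₀, y ∈ A.τ q) (hx : x₀ ∉ A.τ q)
    (hδ : A.δ q x₀ = ∅) : ∀ d, ¬ A.Step (q, w) d := by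
  rintro d (⟨u, x, v, hw', hu', hx', h1, -⟩ | ⟨ht, -, -⟩)
  · obtain ⟨rfl, rfl, rfl⟩ := decompUnique (hw.symm.trans hw') hu hx hu' hx'
    rw [hδ] at h1
    exact h1
  · exact hx (ht x₀ (by rw [hw]; simp))

theorem no_step_end {q : Q} {w : List α} (ht : ∀ y ∈ w, y ∈ A.τ q)
    (hend : A.δend q = ∅) : ∀ d, ¬ A.Step (q, w) d := by
  rintro d (⟨u, x, v, hw', -, hx', -, -⟩ | ⟨-, h1, -⟩)
  · exact hx' (ht x (by rw [show w = u ++ x :: v from hw']; simp))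
  · rw [hend] at h1
    exact h1

theorem not_accepting_of {q : Q} {w : List α} {y : α} (hy : y ∈ w) (hτ : y ∉ A.τ q) :
    ¬ A.Accepting (q, w) := fun hA => hτ (hA.1 y hy)

theorem not_accepting_facc {q : Q} {w : List α} (hf : q ∉ A.Facc) :
    ¬ A.Accepting (q, w) := fun hA => hf hA.2

end GenHelpers

section AlCore3

variable {Q : Type} {A : RNFAwtl Q Al} {q0 : Q} {fr : Bool}

theorem transl_all {q : Q} (ha : Al.a ∈ A.τ q) (hb : Al.b ∈ A.τ q) (hc : Al.c ∈ A.τ q)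
    (w : List Al) : ∀ y ∈ w, y ∈ A.τ q := by
  intro y _
  cases y
  · exact ha
  · exact hb
  · exact hc

theorem transl_front_a {q : Q} {fl : Bool} {i : ℕ} (hfc : fl = true → Al.c ∈ A.τ q)
    (ha : Al.a ∈ A.τ q) :
    ∀ y ∈ (cond fl [Al.c] [] ++ List.replicate i Al.a), y ∈ A.τ q := by
  intro y hy
  rcases List.mem_append.1 hy with hy | hy
  · exact front_transl hfc y hy
  · rw [List.eq_of_mem_replicate hy]
    exact ha

theorem transl_front_ab {q : Q} {fl : Bool} {i k : ℕ} (hfc : fl = true → Al.c ∈ A.τ q)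
    (ha : Al.a ∈ A.τ q) (hb : Al.b ∈ A.τ q) :
    ∀ y ∈ (cond fl [Al.c] [] ++ (List.replicate i Al.a ++ List.replicate k Al.b)),
      y ∈ A.τ q := by
  intro y hy
  rcases List.mem_append.1 hy with hy | hy
  · exact front_transl hfc y hy
  · rcases List.mem_append.1 hy with hy | hy
    · rw [List.eq_of_mem_replicate hy]
      exact ha
    · rw [List.eq_of_mem_replicate hy]
      exact hb

theorem shape_unfoldA {fl : Bool} {i k : ℕ} {Z : List Al} (hi : 1 ≤ i) :
    shape fl i k Z = (cond fl [Al.c] []) ++ Al.a ::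
      (List.replicate (i - 1) Al.a ++ (List.replicate k Al.b ++ (Al.c :: Z))) := by
  obtain ⟨j, rfl⟩ : ∃ j, i = j + 1 := ⟨i - 1, by omega⟩
  simp [shape, List.replicate_succ]

theorem shape_unfoldB {fl : Bool} {i k : ℕ} {Z : List Al} (hk : 1 ≤ k) :
    shape fl i k Z = ((cond fl [Al.c] []) ++ List.replicate i Al.a) ++ Al.b ::
      (List.replicate (k - 1) Al.b ++ (Al.c :: Z)) := by
  obtain ⟨j, rfl⟩ : ∃ j, k = j + 1 := ⟨k - 1, by omega⟩
  simp [shape, List.replicate_succ]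

theorem shape_unfoldC {fl : Bool} {i k : ℕ} {Z : List Al} :
    shape fl i k Z = ((cond fl [Al.c] []) ++ (List.replicate i Al.a ++
      List.replicate k Al.b)) ++ Al.c :: Z := by
  simp [shape]

theorem shape_unfoldFront {i k : ℕ} {Z : List Al} :
    shape true i k Z = [] ++ Al.c :: (List.replicate i Al.a ++
      (List.replicate k Al.b ++ (Al.c :: Z))) := by
  simp [shape]

theorem c_mem_shape {fl : Bool} {i k : ℕ} {Z : List Al} : Al.c ∈ shape fl i k Z := by
  simp [shape]

theorem a_mem_shape {fl : Bool} {i k : ℕ} {Z : List Al} (hi : 1 ≤ i) :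
    Al.a ∈ shape fl i k Z := by
  rw [shape_unfoldA hi]
  simp

theorem b_mem_shape {fl : Bool} {i k : ℕ} {Z : List Al} (hk : 1 ≤ k) :
    Al.b ∈ shape fl i k Z := by
  rw [shape_unfoldB hk]
  simp

/-- The generic run can never get stuck or accept (given no inner-`c` event has occurred
yet): the "goodness" lemma. -/
theorem goodLemma (hdet : A.Deterministic) {L : Set (List Al)}
    (hmem : ∀ w, A.AccFrom q0 w ↔ w ∈ L)
    (axP1 : ∀ i k : ℕ, k ≤ i → shape fr i k [] ∈ L)
    (axN1 : ∀ i k : ℕ, i < k → shape fr i k [] ∉ L) :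
    ∀ t, (∀ t' < t, gev A q0 fr t' ≠ some GEv.C) → (gnext A (gs A q0 fr t)).isSome := by
  intro t
  induction t using Nat.strong_induction_on with
  | _ t ihg =>
  intro hnc
  by_contra hns
  rw [Option.not_isSome_iff_eq_none] at hns
  have hfull : ∀ i k : ℕ, t ≤ i → t ≤ k → ∀ t' < t, ∃ e s',
      gnext A (gs A q0 fr t') = some (e, s') ∧ e ≠ GEv.C ∧
      (e = GEv.A → cA A q0 fr t' < i) ∧ (e = GEv.B → cB A q0 fr t' < k) := by
    intro i k hi hk t' ht'
    have hsome := ihg t' ht' (fun u hu => hnc u (hu.trans ht'))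
    rw [Option.isSome_iff_exists] at hsome
    obtain ⟨⟨e, s'⟩, hes⟩ := hsome
    refine ⟨e, s', hes, fun he => hnc t' ht' (he ▸ gev_some hes), ?_, ?_⟩
    · intro _
      have h1 := cA_le_self (A := A) (q0 := q0) (fr := fr) t'
      omega
    · intro _
      have h1 := cB_le_self (A := A) (q0 := q0) (fr := fr) t'
      omega
  have hrtg : ∀ i k : ℕ, t ≤ i → t ≤ k →
      Relation.ReflTransGen A.Step (q0, shape fr i k [])
        ((gs A q0 fr t).1, shape (gs A q0 fr t).2
          (i - cA A q0 fr t) (k - cB A q0 fr t) []) :=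
    fun i k hi hk => S1 (by simp) t (hfull i k hi hk)
  have hiA : cA A q0 fr t ≤ t := cA_le_self t
  have hiB : cB A q0 fr t ≤ t := cB_le_self t
  rcases gnext_none_inv hns with ⟨hfl, hcτ, hδ⟩ | ⟨hfc, haτ, hδ⟩ | ⟨hfc, haτ, hbτ, hδ⟩ |
      ⟨hfl, haτ, hbτ, hcτ, hδ⟩ | ⟨haτ, hbτ, hcτ, hfacc⟩ | ⟨haτ, hbτ, hcτ, hfacc, hδe⟩
  · -- stuck on front c
    refine RNFAwtl.reject_of_stuck hdet (hrtg (t + 2) (t + 1) (by omega) (by omega)) ?_ ?_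
        ((hmem _).2 (axP1 (t + 2) (t + 1) (by omega)))
    · apply no_step_canon (x₀ := Al.c)
        (hw := by rw [show (gs A q0 fr t).2 = true from hfl, shape_unfoldFront])
        (hu := by simp) (hx := hcτ) (hδ := hδ)
    · exact not_accepting_of c_mem_shape hcτ
  · -- stuck on a
    refine RNFAwtl.reject_of_stuck hdet (hrtg (t + 2) (t + 1) (by omega) (by omega)) ?_ ?_
        ((hmem _).2 (axP1 (t + 2) (t + 1) (by omega)))
    · exact no_step_canon (shape_unfoldA (by omega)) (front_transl hfc) haτ hδ
    · exact not_accepting_of (a_mem_shape (by omega)) haτ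
  · -- stuck on b
    refine RNFAwtl.reject_of_stuck hdet (hrtg (t + 2) (t + 1) (by omega) (by omega)) ?_ ?_
        ((hmem _).2 (axP1 (t + 2) (t + 1) (by omega)))
    · exact no_step_canon (shape_unfoldB (by omega)) (transl_front_a hfc haτ) hbτ hδ
    · exact not_accepting_of (b_mem_shape (by omega)) hbτ
  · -- stuck on inner c
    refine RNFAwtl.reject_of_stuck hdet (hrtg (t + 2) (t + 1) (by omega) (by omega)) ?_ ?_
        ((hmem _).2 (axP1 (t + 2) (t + 1) (by omega)))
    · refine no_step_canon shape_unfoldC ?_ hcτ hδ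
      refine transl_front_ab ?_ haτ hbτ
      intro h
      rw [hfl] at h
      simp at h
    · exact not_accepting_of c_mem_shape hcτ
  · -- accepting with both counters positive: accepts a bad word
    have hacc : A.AccFrom q0 (shape fr (t + 1) (t + 2) []) :=
      RNFAwtl.accFrom_of_rtg A (hrtg (t + 1) (t + 2) (by omega) (by omega))
        ⟨transl_all haτ hbτ hcτ _, hfacc⟩
    exact axN1 (t + 1) (t + 2) (by omega) ((hmem _).1 hacc)
  · -- stuck at end-of-tape
    refine RNFAwtl.reject_of_stuck hdet (hrtg (t + 2) (t + 1) (by omega) (by omega)) ?_ ?_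
        ((hmem _).2 (axP1 (t + 2) (t + 1) (by omega)))
    · exact no_step_end (transl_all haτ hbτ hcτ _) hδe
    · exact not_accepting_facc hfacc

end AlCore3
theorem alcore {L : Set (List Al)} {fr : Bool}
    (axP1 : ∀ i k : ℕ, k ≤ i → shape fr i k [] ∈ L)
    (axN1 : ∀ i k : ℕ, i < k → shape fr i k [] ∉ L)
    (axN2 : ∀ i k z : ℕ, 1 ≤ z → shape fr i k (List.replicate z Al.b) ∉ L)
    (axA1 : ∀ j Ad LB : ℕ, Ad < LB → ∃ i1 Z1 i2 Z2, Al.c ∉ Z1 ∧ Al.c ∉ Z2 ∧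
      LB ≤ i1 ∧ LB ≤ i2 ∧ shape fr i1 j Z1 ∈ L ∧ shape fr i2 j Z2 ∉ L ∧
      List.replicate (i1 - Ad) Al.a ++ Z1 = List.replicate (i2 - Ad) Al.a ++ Z2) :
    L ∉ RDFAwtlLangs Al := by
  classical
  rintro ⟨Q, hQf, A, hdet, hlang⟩
  haveI := hQf
  obtain ⟨q0, hI⟩ := hdet.1
  have hmem : ∀ w, A.AccFrom q0 w ↔ w ∈ L := by
    intro w
    rw [← RNFAwtl.accepts_iff A hI w, ← hlang]
    exact Iff.rfl
  have hgood := goodLemma (q0 := q0) (fr := fr) hdet hmem axP1 axN1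
  by_cases hC : ∃ t, gev A q0 fr t = some GEv.C
  · -- CASE B: there is a first inner-c deletion event
    obtain ⟨tc, htc, hmintc⟩ : ∃ tc, gev A q0 fr tc = some GEv.C ∧
        ∀ t' < tc, gev A q0 fr t' ≠ some GEv.C :=
      ⟨Nat.find hC, Nat.find_spec hC, fun t' h' => Nat.find_min hC h'⟩
    obtain ⟨s', hsome⟩ := gev_elim htc
    rcases gnext_inv hsome with ⟨he, -⟩ | ⟨he, -⟩ | ⟨he, -⟩ |
        ⟨-, hfl0, haτ, hbτ, hcτ, hδc, -⟩ | ⟨he, -⟩ <;> try exact absurd he (by simp)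
    set m := tc + 1 with hmdef
    have hfull : ∀ t' < tc, ∃ e s'', gnext A (gs A q0 fr t') = some (e, s'') ∧
        e ≠ GEv.C := by
      intro t' h'
      have h1 := hgood t' (fun u hu => hmintc u (hu.trans h'))
      rw [Option.isSome_iff_exists] at h1
      obtain ⟨⟨e, s''⟩, hes⟩ := h1
      exact ⟨e, s'', hes, fun hee => hmintc t' h' (hee ▸ gev_some hes)⟩
    have hcond1 : ∀ t' < tc, ∃ e s'', gnext A (gs A q0 fr t') = some (e, s'') ∧
        e ≠ GEv.C ∧ (e = GEv.A → cA A q0 fr t' < m) ∧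
        (e = GEv.B → cB A q0 fr t' < m) := by
      intro t' h'
      obtain ⟨e, s'', hes, hnc⟩ := hfull t' h'
      have h1 := cA_le_self (A := A) (q0 := q0) (fr := fr) t'
      have h2 := cB_le_self (A := A) (q0 := q0) (fr := fr) t'
      exact ⟨e, s'', hes, hnc, fun _ => by omega, fun _ => by omega⟩
    have hcond2 : ∀ t' < tc, ∃ e s'', gnext A (gs A q0 fr t') = some (e, s'') ∧
        e ≠ GEv.C ∧ (e = GEv.A → cA A q0 fr t' < m) ∧
        (e = GEv.B → cB A q0 fr t' < cB A q0 fr tc) := by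
      intro t' h'
      obtain ⟨e, s'', hes, hnc⟩ := hfull t' h'
      have h1 := cA_le_self (A := A) (q0 := q0) (fr := fr) t'
      refine ⟨e, s'', hes, hnc, fun _ => by omega, fun hee => ?_⟩
      exact cB_lt h' (by rw [← hee]; exact gev_some hes)
    have hrtg1 := S1 (i := m) (k := m) (Z := ([] : List Al)) (by simp) tc hcond1
    have hrtg2 := S1 (i := m) (k := cB A q0 fr tc)
      (Z := List.replicate (m - cB A q0 fr tc) Al.b) (by simp) tc hcond2
    have hstep1 : A.Step ((gs A q0 fr tc).1,
        shape (gs A q0 fr tc).2 (m - cA A q0 fr tc) (m - cB A q0 fr tc) [])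
        (s'.1, List.replicate (m - cA A q0 fr tc) Al.a ++
          List.replicate (m - cB A q0 fr tc) Al.b) := by
      refine Or.inl ⟨List.replicate (m - cA A q0 fr tc) Al.a ++
        List.replicate (m - cB A q0 fr tc) Al.b, Al.c, [], ?_, ?_, hcτ, hδc, by simp⟩
      · rw [shape_unfoldC, hfl0]
        simp
      · intro y hy
        rcases List.mem_append.1 hy with hy | hy
        · rw [List.eq_of_mem_replicate hy]
          exact haτ
        · rw [List.eq_of_mem_replicate hy]
          exact hbτ
    have hstep2 : A.Step ((gs A q0 fr tc).1,
        shape (gs A q0 fr tc).2 (m - cA A q0 fr tc)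
          (cB A q0 fr tc - cB A q0 fr tc) (List.replicate (m - cB A q0 fr tc) Al.b))
        (s'.1, List.replicate (m - cA A q0 fr tc) Al.a ++
          List.replicate (m - cB A q0 fr tc) Al.b) := by
      refine Or.inl ⟨List.replicate (m - cA A q0 fr tc) Al.a, Al.c,
        List.replicate (m - cB A q0 fr tc) Al.b, ?_, ?_, hcτ, hδc, rfl⟩
      · rw [shape_unfoldC, hfl0, Nat.sub_self]
        simp
      · intro y hy
        rw [List.eq_of_mem_replicate hy]
        exact haτ
    have hAcc2 := RNFAwtl.transfer hdet (hrtg1.tail hstep1) (hrtg2.tail hstep2)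
      ((hmem _).2 (axP1 m m le_rfl))
    have hBB := cB_le_self (A := A) (q0 := q0) (fr := fr) tc
    exact axN2 m (cB A q0 fr tc) (m - cB A q0 fr tc) (by omega) ((hmem _).1 hAcc2)
  · -- no inner-c deletion ever
    push_neg at hC
    have hfull2 : ∀ t, ∃ e s', gnext A (gs A q0 fr t) = some (e, s') ∧ e ≠ GEv.C := by
      intro t
      have h1 := hgood t (fun u _ => hC u)
      rw [Option.isSome_iff_exists] at h1
      obtain ⟨⟨e, s'⟩, hes⟩ := h1
      exact ⟨e, s', hes, fun hee => hC t (hee ▸ gev_some hes)⟩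
    by_cases hbad : ∃ t s', gnext A (gs A q0 fr t) = some (GEv.B, s') ∧
        Al.c ∉ A.τ (gs A q0 fr t).1
    · -- CASE A1: a "bad" b-deletion exists
      obtain ⟨td, sd, hsomeD, hcbad⟩ := hbad
      rcases gnext_inv hsomeD with ⟨he, -⟩ | ⟨he, -⟩ |
          ⟨-, hfc, haτ, hbτ, -, -⟩ | ⟨he, -⟩ | ⟨he, -⟩ <;> try exact absurd he (by simp)
      have hfl0 : (gs A q0 fr td).2 = false := by
        cases h' : (gs A q0 fr td).2
        · rfl
        · exact absurd (hfc h') hcbad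
      obtain ⟨i1, Z1, i2, Z2, hZ1, hZ2, hi1, hi2, hPmem, hNmem, heq⟩ :=
        axA1 (cB A q0 fr td) (cA A q0 fr td) (cA A q0 fr td + 1) (Nat.lt_succ_self _)
      have hcond : ∀ i : ℕ, cA A q0 fr td + 1 ≤ i → ∀ t' < td,
          ∃ e s'', gnext A (gs A q0 fr t') = some (e, s'') ∧ e ≠ GEv.C ∧
          (e = GEv.A → cA A q0 fr t' < i) ∧
          (e = GEv.B → cB A q0 fr t' < cB A q0 fr td) := by
        intro i hi t' h'
        obtain ⟨e, s'', hes, hnc⟩ := hfull2 t'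
        have h1 : cA A q0 fr t' ≤ cA A q0 fr td := cA_mono (le_of_lt h')
        refine ⟨e, s'', hes, hnc, fun _ => by omega, fun hee => ?_⟩
        exact cB_lt h' (by rw [← hee]; exact gev_some hes)
      have hrtg1 := S1 (i := i1) (k := cB A q0 fr td) (Z := Z1) hZ1 td (hcond i1 hi1)
      have hrtg2 := S1 (i := i2) (k := cB A q0 fr td) (Z := Z2) hZ2 td (hcond i2 hi2)
      have hwshape : ∀ (i : ℕ) (Z : List Al),
          shape (gs A q0 fr td).2 (i - cA A q0 fr td)
            (cB A q0 fr td - cB A q0 fr td) Z =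
          List.replicate (i - cA A q0 fr td) Al.a ++ Al.c :: Z := by
        intro i Z
        rw [shape_unfoldC, hfl0, Nat.sub_self]
        simp
      by_cases hemp : A.δ (gs A q0 fr td).1 Al.c = ∅
      · -- stuck: the in-language word is rejected
        refine RNFAwtl.reject_of_stuck hdet hrtg1 ?_ ?_ ((hmem _).2 hPmem)
        · rw [hwshape i1 Z1]
          refine no_step_canon rfl ?_ hcbad hemp
          intro y hy
          rw [List.eq_of_mem_replicate hy]
          exact haτ
        · exact not_accepting_of c_mem_shape hcbad
      · obtain ⟨q', hq'⟩ := Set.nonempty_iff_ne_empty.2 hemp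
        have hstep1 : A.Step ((gs A q0 fr td).1,
            shape (gs A q0 fr td).2 (i1 - cA A q0 fr td)
              (cB A q0 fr td - cB A q0 fr td) Z1)
            (q', List.replicate (i1 - cA A q0 fr td) Al.a ++ Z1) := by
          refine Or.inl ⟨List.replicate (i1 - cA A q0 fr td) Al.a, Al.c, Z1,
            by rw [hwshape], ?_, hcbad, hq', rfl⟩
          intro y hy
          rw [List.eq_of_mem_replicate hy]
          exact haτ
        have hstep2 : A.Step ((gs A q0 fr td).1,
            shape (gs A q0 fr td).2 (i2 - cA A q0 fr td)
              (cB A q0 fr td - cB A q0 fr td) Z2)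
            (q', List.replicate (i2 - cA A q0 fr td) Al.a ++ Z2) := by
          refine Or.inl ⟨List.replicate (i2 - cA A q0 fr td) Al.a, Al.c, Z2,
            by rw [hwshape], ?_, hcbad, hq', rfl⟩
          intro y hy
          rw [List.eq_of_mem_replicate hy]
          exact haτ
        have h2' := hrtg2.tail hstep2
        rw [← heq] at h2'
        exact hNmem ((hmem _).1
          (RNFAwtl.transfer hdet (hrtg1.tail hstep1) h2' ((hmem _).2 hPmem)))
    · -- no bad b-deletion
      push_neg at hbad
      by_cases hBev : ∃ t, gev A q0 fr t = some GEv.B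
      · -- CASE A2: some (good) b-deletion
        have h1ex : ∃ t, 1 ≤ cB A q0 fr t := by
          obtain ⟨tb, htb⟩ := hBev
          exact ⟨tb + 1, by rw [cB_succ, if_pos htb]; omega⟩
        obtain ⟨T, hT1, hTmin⟩ : ∃ T, 1 ≤ cB A q0 fr T ∧
            ∀ t' < T, cB A q0 fr t' = 0 :=
          ⟨Nat.find h1ex, Nat.find_spec h1ex, fun t' h' => by
            have := Nat.find_min h1ex h'
            omega⟩
        have hTval : cB A q0 fr T = 1 := by
          have hT0 : T ≠ 0 := by
            intro h0
            rw [h0] at hT1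
            simp at hT1
          obtain ⟨u, rfl⟩ : ∃ u, T = u + 1 := ⟨T - 1, by omega⟩
          have h1 : cB A q0 fr u = 0 := hTmin u (Nat.lt_succ_self u)
          have h2 := cB_succ (A := A) (q0 := q0) (fr := fr) u
          split_ifs at h2 <;> omega
        set i := cA A q0 fr T + 1 with hidef
        have hcond1 : ∀ t' < T, ∃ e s'', gnext A (gs A q0 fr t') = some (e, s'') ∧
            e ≠ GEv.C ∧ (e = GEv.A → cA A q0 fr t' < i) ∧
            (e = GEv.B → cB A q0 fr t' < 1) := by
          intro t' h'
          obtain ⟨e, s'', hes, hnc⟩ := hfull2 t'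
          have h1 : cA A q0 fr t' ≤ cA A q0 fr T := cA_mono (le_of_lt h')
          exact ⟨e, s'', hes, hnc, fun _ => by omega,
            fun _ => by rw [hTmin t' h']; omega⟩
        have hcond2 : ∀ t' < T, ∃ e s'', gnext A (gs A q0 fr t') = some (e, s'') ∧
            e ≠ GEv.C ∧ (e = GEv.A → cA A q0 fr t' < i) ∧
            (e = GEv.B → cB A q0 fr t' < 1 ∧ Al.c ∈ A.τ (gs A q0 fr t').1) := by
          intro t' h'
          obtain ⟨e, s'', hes, hnc⟩ := hfull2 t'
          have h1 : cA A q0 fr t' ≤ cA A q0 fr T := cA_mono (le_of_lt h')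
          refine ⟨e, s'', hes, hnc, fun _ => by omega, fun hee => ?_⟩
          refine ⟨by rw [hTmin t' h']; omega, ?_⟩
          exact hbad t' s'' (by rw [← hee]; exact hes)
        have hrtg1 := S1 (i := i) (k := 1) (Z := ([] : List Al)) (by simp) T hcond1
        have hrtg2 := S1' (i := i) (m := 1) T hcond2
        have hshapeeq : shape (gs A q0 fr T).2 (i - cA A q0 fr T)
            (1 - cB A q0 fr T) [] =
            shape2 (gs A q0 fr T).2 (i - cA A q0 fr T) (1 - cB A q0 fr T) := by
          rw [hTval, show i - cA A q0 fr T = 1 from by omega]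
          simp [shape, shape2]
        rw [hshapeeq] at hrtg1
        have hAcc2 := RNFAwtl.transfer hdet hrtg1 hrtg2
          ((hmem _).2 (axP1 i 1 (by omega)))
        have hw2eq : shape2 fr i 1 = shape fr i 0 (List.replicate 1 Al.b) := by
          simp [shape, shape2]
        rw [hw2eq] at hAcc2
        exact axN2 i 0 1 le_rfl ((hmem _).1 hAcc2)
      · -- CASE A3: no b-deletion at all
        push_neg at hBev
        have hcB0 : ∀ t, cB A q0 fr t = 0 := by
          intro t
          induction t with
          | zero => rfl
          | succ u ih => rw [cB_succ, if_neg (hBev u), ih]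
        by_cases hAunb : ∀ N : ℕ, ∃ t, N ≤ cA A q0 fr t
        · -- a-deletions unbounded: exit-state pigeonhole
          set T : ℕ → ℕ := fun n => Nat.find (hAunb n) with hTdef
          have hTspec : ∀ n, n ≤ cA A q0 fr (T n) := fun n => Nat.find_spec (hAunb n)
          have hTmin : ∀ n t', t' < T n → cA A q0 fr t' < n := by
            intro n t' h'
            have := Nat.find_min (hAunb n) h'
            omega
          have hTval : ∀ n, cA A q0 fr (T n) = n := by
            intro n
            rcases Nat.eq_zero_or_pos (T n) with h0 | hpos
            · have h1 := hTspec n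
              rw [h0] at h1
              simp only [cA_zero] at h1
              rw [h0]
              simp only [cA_zero]
              omega
            · obtain ⟨u, hu⟩ : ∃ u, T n = u + 1 := ⟨T n - 1, by omega⟩
              have h1 : cA A q0 fr u < n := hTmin n u (by omega)
              have h2 := hTspec n
              rw [hu] at h2 ⊢
              rw [cA_succ] at h2 ⊢
              split_ifs at h2 ⊢ <;> omega
          have hpig := Fintype.exists_ne_map_eq_of_card_lt
            (f := fun x : Fin (Fintype.card (Q × Bool) + 1) =>
              gs A q0 fr (T (x.val + 1)))
            (by simp)
          obtain ⟨x, y, hxy, hgseq⟩ := hpig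
          have key : ∀ u v : ℕ, 1 ≤ u → u < v →
              gs A q0 fr (T u) = gs A q0 fr (T v) → False := by
            intro u v hu huv hgs
            have hcondv : ∀ t' < T v, ∃ e s'', gnext A (gs A q0 fr t') = some (e, s'') ∧
                e ≠ GEv.C ∧ (e = GEv.A → cA A q0 fr t' < v) ∧
                (e = GEv.B → cB A q0 fr t' < v) := by
              intro t' h'
              obtain ⟨e, s'', hes, hnc⟩ := hfull2 t'
              exact ⟨e, s'', hes, hnc, fun _ => hTmin v t' h',
                fun hee => absurd (hee ▸ gev_some hes) (hBev t')⟩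
            have hcondu : ∀ t' < T u, ∃ e s'', gnext A (gs A q0 fr t') = some (e, s'') ∧
                e ≠ GEv.C ∧ (e = GEv.A → cA A q0 fr t' < u) ∧
                (e = GEv.B → cB A q0 fr t' < v) := by
              intro t' h'
              obtain ⟨e, s'', hes, hnc⟩ := hfull2 t'
              exact ⟨e, s'', hes, hnc, fun _ => hTmin u t' h',
                fun hee => absurd (hee ▸ gev_some hes) (hBev t')⟩
            have hrtg1 := S1 (i := v) (k := v) (Z := ([] : List Al)) (by simp)
              (T v) hcondv
            have hrtg2 := S1 (i := u) (k := v) (Z := ([] : List Al)) (by simp)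
              (T u) hcondu
            rw [hTval v, hcB0, Nat.sub_self] at hrtg1
            rw [hTval u, hcB0, Nat.sub_self, hgs] at hrtg2
            exact axN1 u v huv ((hmem _).1
              (RNFAwtl.transfer hdet hrtg1 hrtg2 ((hmem _).2 (axP1 v v le_rfl))))
          rcases Nat.lt_or_ge x.val y.val with hlt | hge
          · exact key (x.val + 1) (y.val + 1) (by omega) (by omega) hgseq
          · have hlt : y.val < x.val := by
              rcases Nat.lt_or_ge y.val x.val with h | h
              · exact h
              · exact absurd (Fin.ext (by omega)) hxy
            exact key (y.val + 1) (x.val + 1) (by omega) (by omega) hgseq.symm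
        · -- a-deletions bounded: the run eventually cycles
          push_neg at hAunb
          obtain ⟨N, hN⟩ := hAunb
          have hbdd : BddAbove (Set.range (cA A q0 fr)) := by
            rw [bddAbove_def]
            refine ⟨N, fun v hv => ?_⟩
            obtain ⟨t, rfl⟩ := hv
            exact le_of_lt (hN t)
          have hne : (Set.range (cA A q0 fr)).Nonempty := ⟨cA A q0 fr 0, ⟨0, rfl⟩⟩
          obtain ⟨t0, ht0⟩ := Nat.sSup_mem hne hbdd
          have hstab : ∀ t, t0 ≤ t → cA A q0 fr t = cA A q0 fr t0 := by
            intro t ht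
            refine le_antisymm ?_ (cA_mono ht)
            rw [ht0]
            exact le_csSup hbdd ⟨t, rfl⟩
          have hnoA : ∀ t, t0 ≤ t → gev A q0 fr t ≠ some GEv.A := by
            intro t ht hev
            have h1 : cA A q0 fr (t + 1) = cA A q0 fr t + 1 := by
              rw [cA_succ, if_pos hev]
            have h2 := hstab t ht
            have h3 := hstab (t + 1) (by omega)
            omega
          have hEorC0 : ∀ t, t0 ≤ t → gev A q0 fr t = some GEv.E ∨
              gev A q0 fr t = some GEv.C0 := by
            intro t ht
            obtain ⟨e, s', hes, hnc⟩ := hfull2 t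
            have hgev := gev_some hes
            cases e with
            | A => exact absurd hgev (hnoA t ht)
            | B => exact absurd hgev (hBev t)
            | C => exact absurd rfl hnc
            | C0 => exact Or.inr hgev
            | E => exact Or.inl hgev
          -- eventually all events are E
          have hallE : ∃ t1, t0 ≤ t1 ∧ ∀ u, t1 ≤ u → gev A q0 fr u = some GEv.E := by
            by_cases hC0 : ∃ t, t0 ≤ t ∧ gev A q0 fr t = some GEv.C0
            · obtain ⟨tz, htz0, htzC⟩ := hC0
              refine ⟨tz + 1, by omega, ?_⟩
              have hfl : ∀ u, tz + 1 ≤ u → (gs A q0 fr u).2 = false ∧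
                  gev A q0 fr u = some GEv.E := by
                intro u hu
                induction u with
                | zero => omega
                | succ n ih =>
                  rcases Nat.lt_or_ge n (tz + 1) with h' | h'
                  · -- n + 1 = tz + 1
                    have hn : n = tz := by omega
                    subst hn
                    obtain ⟨sz, hsz⟩ := gev_elim htzC
                    rcases gnext_inv hsz with ⟨-, -, -, -, hfl'⟩ | ⟨he, -⟩ | ⟨he, -⟩ |
                        ⟨he, -⟩ | ⟨he, -⟩ <;> try exact absurd he (by simp)
                    have hgseq : (gs A q0 fr (n + 1)).2 = false := by
                      rw [gs_succ hsz]
                      exact hfl'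
                    refine ⟨hgseq, ?_⟩
                    rcases hEorC0 (n + 1) (by omega) with h | h
                    · exact h
                    · obtain ⟨sz2, hsz2⟩ := gev_elim h
                      rcases gnext_inv hsz2 with ⟨-, hflT, -, -, -⟩ | ⟨he, -⟩ |
                          ⟨he, -⟩ | ⟨he, -⟩ | ⟨he, -⟩ <;> try exact absurd he (by simp)
                      rw [hgseq] at hflT
                      simp at hflT
                  · obtain ⟨hprev, hprevE⟩ := ih h'
                    obtain ⟨sz, hsz⟩ := gev_elim hprevE
                    rcases gnext_inv hsz with ⟨he, -⟩ | ⟨he, -⟩ | ⟨he, -⟩ | ⟨he, -⟩ |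
                        ⟨-, -, -, -, -, -, hfl'⟩ <;> try exact absurd he (by simp)
                    have hgseq : (gs A q0 fr (n + 1)).2 = false := by
                      rw [gs_succ hsz, hfl', hprev]
                    refine ⟨hgseq, ?_⟩
                    rcases hEorC0 (n + 1) (by omega) with h | h
                    · exact h
                    · obtain ⟨sz2, hsz2⟩ := gev_elim h
                      rcases gnext_inv hsz2 with ⟨-, hflT, -, -, -⟩ | ⟨he, -⟩ |
                          ⟨he, -⟩ | ⟨he, -⟩ | ⟨he, -⟩ <;> try exact absurd he (by simp)
                      rw [hgseq] at hflT
                      simp at hflT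
              exact fun u hu => (hfl u hu).2
            · push_neg at hC0
              refine ⟨t0, le_rfl, fun u hu => ?_⟩
              rcases hEorC0 u hu with h | h
              · exact h
              · exact absurd h (hC0 u hu)
          obtain ⟨t1, ht1, hE⟩ := hallE
          -- pigeonhole on states in [t1, t1 + card]
          have hpig := Fintype.exists_ne_map_eq_of_card_lt
            (f := fun x : Fin (Fintype.card (Q × Bool) + 1) => gs A q0 fr (t1 + x.val))
            (by simp)
          obtain ⟨x, y, hxy, hgseq⟩ := hpig
          have key : ∀ u v : ℕ, t1 ≤ u → u < v → gs A q0 fr u = gs A q0 fr v →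
              False := by
            intro u v hu huv hgs
            set m := v + 1 with hmdef
            have hcond : ∀ t' < u, ∃ e s'', gnext A (gs A q0 fr t') = some (e, s'') ∧
                e ≠ GEv.C ∧ (e = GEv.A → cA A q0 fr t' < m) ∧
                (e = GEv.B → cB A q0 fr t' < m) := by
              intro t' h'
              obtain ⟨e, s'', hes, hnc⟩ := hfull2 t'
              have h1 := cA_le_self (A := A) (q0 := q0) (fr := fr) t'
              have h2 := cB_le_self (A := A) (q0 := q0) (fr := fr) t'
              exact ⟨e, s'', hes, hnc, fun _ => by omega, fun _ => by omega⟩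
            have hrtg := S1 (i := m) (k := m) (Z := ([] : List Al)) (by simp) u hcond
            -- counts are constant from u onwards
            have hcAc : ∀ t', u ≤ t' → cA A q0 fr t' = cA A q0 fr u := by
              intro t' ht'
              rw [hstab t' (le_trans (le_trans ht1 hu) ht'),
                hstab u (le_trans ht1 hu)]
            -- one E step
            obtain ⟨s', hs'⟩ := gev_elim (hE u hu)
            have hstep : A.Step ((gs A q0 fr u).1,
                shape (gs A q0 fr u).2 (m - cA A q0 fr u) (m - cB A q0 fr u) [])
                (s'.1, shape s'.2 (m - cA A q0 fr u) (m - cB A q0 fr u) []) :=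
              stepE (by simp) hs'
            -- chain of E steps back to the repeated state
            have hchain : ∀ d : ℕ, u + 1 + d ≤ v →
                Relation.ReflTransGen A.Step
                  (s'.1, shape s'.2 (m - cA A q0 fr u) (m - cB A q0 fr u) [])
                  ((gs A q0 fr (u + 1 + d)).1,
                    shape (gs A q0 fr (u + 1 + d)).2
                      (m - cA A q0 fr u) (m - cB A q0 fr u) []) := by
              intro d
              induction d with
              | zero =>
                intro _
                rw [show u + 1 + 0 = u + 1 from rfl, gs_succ hs']
              | succ n ih =>
                intro hle
                have hih := ih (by omega)
                obtain ⟨s'', hs''⟩ := gev_elim (hE (u + 1 + n) (by omega))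
                have hstep2 : A.Step ((gs A q0 fr (u + 1 + n)).1,
                    shape (gs A q0 fr (u + 1 + n)).2
                      (m - cA A q0 fr u) (m - cB A q0 fr u) [])
                    (s''.1, shape s''.2 (m - cA A q0 fr u) (m - cB A q0 fr u) []) :=
                  stepE (by simp) hs''
                have hnext : gs A q0 fr (u + 1 + (n + 1)) = s'' := by
                  rw [show u + 1 + (n + 1) = (u + 1 + n) + 1 from by omega]
                  exact gs_succ hs''
                rw [hnext]
                exact hih.tail hstep2
            have hchain2 := hchain (v - (u + 1)) (by omega)
            rw [show u + 1 + (v - (u + 1)) = v from by omega, ← hgs] at hchain2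
            -- non-accepting: E implies not Facc
            have hnacc : ¬ A.Accepting ((gs A q0 fr u).1,
                shape (gs A q0 fr u).2 (m - cA A q0 fr u) (m - cB A q0 fr u) []) := by
              rcases gnext_inv hs' with ⟨he, -⟩ | ⟨he, -⟩ | ⟨he, -⟩ | ⟨he, -⟩ |
                  ⟨-, -, -, -, hfacc, -, -⟩ <;> try exact absurd he (by simp)
              exact not_accepting_facc hfacc
            exact RNFAwtl.reject_of_cycle hdet hrtg hstep hchain2 hnacc
              ((hmem _).2 (axP1 m m le_rfl))
          rcases Nat.lt_or_ge x.val y.val with hlt | hge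
          · exact key (t1 + x.val) (t1 + y.val) (by omega) (by omega) hgseq
          · have hlt : y.val < x.val := by
              rcases Nat.lt_or_ge y.val x.val with h | h
              · exact h
              · exact absurd (Fin.ext (by omega)) hxy
            exact key (t1 + y.val) (t1 + x.val) (by omega) (by omega) hgseq.symm
/-! ### Instantiations of the core theorem -/

def LcSet : Set (List Al) :=
  { w | ∃ u, Al.c ∉ u ∧ u.count Al.b ≤ u.count Al.a ∧ w = u ++ [Al.c] }

theorem c_notin_ab {i k : ℕ} :
    Al.c ∉ List.replicate i Al.a ++ List.replicate k Al.b := by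
  intro hc
  rcases List.mem_append.1 hc with hc | hc
  · exact absurd (List.eq_of_mem_replicate hc) (by simp)
  · exact absurd (List.eq_of_mem_replicate hc) (by simp)

theorem shape_false (i k : ℕ) (Z : List Al) :
    shape false i k Z =
      List.replicate i Al.a ++ (List.replicate k Al.b ++ (Al.c :: Z)) := by
  simp [shape]

theorem shape_true (i k : ℕ) (Z : List Al) :
    shape true i k Z =
      Al.c :: (List.replicate i Al.a ++ (List.replicate k Al.b ++ (Al.c :: Z))) := by
  simp [shape]

theorem lcset_notin : LcSet ∉ RDFAwtlLangs Al := by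
  refine alcore (fr := false) ?_ ?_ ?_ ?_
  · -- axP1
    intro i k hk
    refine ⟨List.replicate i Al.a ++ List.replicate k Al.b, c_notin_ab, ?_, ?_⟩
    · simp [List.count_append, List.count_replicate]
      exact hk
    · rw [shape_false]
      simp
  · -- axN1
    rintro i k hik ⟨u, hcu, hcnt, hequ⟩
    rw [shape_false] at hequ
    have hu : u = List.replicate i Al.a ++ List.replicate k Al.b := by
      have h2 : (List.replicate i Al.a ++ List.replicate k Al.b) ++ [Al.c] =
          u ++ [Al.c] := by
        rw [← hequ]
        simp
      exact (List.append_inj_left' h2 rfl).symm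
    rw [hu] at hcnt
    simp [List.count_append, List.count_replicate] at hcnt
    omega
  · -- axN2
    rintro i k z hz ⟨u, hcu, hcnt, hequ⟩
    obtain ⟨z', rfl⟩ : ∃ z', z = z' + 1 := ⟨z - 1, by omega⟩
    have h1 : shape false i k (List.replicate (z' + 1) Al.b) =
        (List.replicate i Al.a ++ (List.replicate k Al.b ++
          (Al.c :: List.replicate z' Al.b))) ++ [Al.b] := by
      rw [shape_false, List.replicate_succ']
      simp
    rw [h1] at hequ
    have h3 := congrArg List.getLast? hequ
    rw [List.getLast?_concat, List.getLast?_concat] at h3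
    simp at h3
  · -- axA1
    intro j Ad LB hAd
    refine ⟨LB + j + 1, [], LB + j, [Al.a], by simp, by simp, by omega, by omega,
      ?_, ?_, ?_⟩
    · refine ⟨List.replicate (LB + j + 1) Al.a ++ List.replicate j Al.b, ?_, ?_, ?_⟩
      · exact c_notin_ab
      · simp [List.count_append, List.count_replicate]
        omega
      · rw [shape_false]
        simp
    · rintro ⟨u, hcu, hcnt, hequ⟩
      have h1 : shape false (LB + j) j [Al.a] =
          (List.replicate (LB + j) Al.a ++ (List.replicate j Al.b ++ [Al.c])) ++
            [Al.a] := by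
        rw [shape_false]
        simp
      rw [h1] at hequ
      have h3 := congrArg List.getLast? hequ
      rw [List.getLast?_concat, List.getLast?_concat] at h3
      simp at h3
    · have : LB + j + 1 - Ad = (LB + j - Ad) + 1 := by omega
      rw [this, List.replicate_succ']
      simp

/-- Two-`c` factorization for `LcR * (LcR)∗` and `(LcR)∗`. -/
theorem count_join_c {l : List (List Al)} (h : ∀ x ∈ l, x.count Al.c = 1) :
    l.flatten.count Al.c = l.length := by
  induction l with
  | nil => simp
  | cons x xs ih =>
    simp only [List.flatten_cons, List.count_append, List.length_cons]
    rw [h x (by simp), ih (fun y hy => h y (by simp [hy]))]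
    omega

theorem lcr_count_c {w : List Al} (h : w ∈ (LcR : Set (List Al))) :
    w.count Al.c = 1 := by
  obtain ⟨u, hcu, -, rfl⟩ := h
  simp [List.count_cons, List.count_eq_zero_of_not_mem hcu]

theorem kstar_twoC {w : List Al} (h : w ∈ (KStar.kstar LcR : Language Al))
    (hc : w.count Al.c = 2) :
    ∃ w1 w2, Al.c ∉ w1 ∧ Al.c ∉ w2 ∧ w1.count Al.b ≤ w1.count Al.a ∧
      w2.count Al.b ≤ w2.count Al.a ∧ w = (Al.c :: w1) ++ (Al.c :: w2) := by
  rw [Language.mem_kstar] at h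
  obtain ⟨l, rfl, hall⟩ := h
  have hlen : l.length = 2 := by
    rw [← count_join_c (fun x hx => lcr_count_c (hall x hx))]
    exact hc
  obtain ⟨x1, x2, rfl⟩ := List.length_eq_two.1 hlen
  obtain ⟨w1, hw1c, hw1, rfl⟩ := hall x1 (by simp)
  obtain ⟨w2, hw2c, hw2, rfl⟩ := hall x2 (by simp)
  exact ⟨w1, w2, hw1c, hw2c, hw1, hw2, by simp⟩

theorem prod_twoC {w : List Al} (h : w ∈ (LcR * KStar.kstar LcR : Language Al))
    (hc : w.count Al.c = 2) :
    ∃ w1 w2, Al.c ∉ w1 ∧ Al.c ∉ w2 ∧ w1.count Al.b ≤ w1.count Al.a ∧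
      w2.count Al.b ≤ w2.count Al.a ∧ w = (Al.c :: w1) ++ (Al.c :: w2) := by
  rw [Language.mem_mul] at h
  obtain ⟨u, hu, v, hv, rfl⟩ := h
  rw [Language.mem_kstar] at hv
  obtain ⟨l, rfl, hall⟩ := hv
  have hcu : u.count Al.c = 1 := lcr_count_c hu
  have hlen : l.length = 1 := by
    have h1 : l.flatten.count Al.c = l.length :=
      count_join_c (fun x hx => lcr_count_c (hall x hx))
    rw [List.count_append] at hc
    omega
  obtain ⟨x1, rfl⟩ := List.length_eq_one_iff.1 hlen
  obtain ⟨w1, hw1c, hw1, rfl⟩ := hu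
  obtain ⟨w2, hw2c, hw2, rfl⟩ := hall x1 (by simp)
  exact ⟨w1, w2, hw1c, hw2c, hw1, hw2, by simp⟩

theorem shape_count_c {i k : ℕ} {Z : List Al} (hZ : Al.c ∉ Z) :
    (shape true i k Z).count Al.c = 2 := by
  rw [shape_true]
  simp [List.count_cons, List.count_append, List.count_replicate,
    List.count_eq_zero_of_not_mem hZ]

/-- Splitting a two-`c` word of `shape` form. -/
theorem shape_match {i k : ℕ} {Z w1 w2 : List Al} (hZ : Al.c ∉ Z)
    (hc1 : Al.c ∉ w1) (hc2 : Al.c ∉ w2)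
    (heq : shape true i k Z = (Al.c :: w1) ++ (Al.c :: w2)) :
    w1 = List.replicate i Al.a ++ List.replicate k Al.b ∧ w2 = Z := by
  rw [shape_true] at heq
  simp only [List.cons_append, List.cons.injEq, true_and] at heq
  have heq2 : (List.replicate i Al.a ++ List.replicate k Al.b) ++ Al.c :: Z =
      w1 ++ Al.c :: w2 := by
    rw [← heq]
    simp
  have := decompUnique (P := fun x => x ≠ Al.c) heq2
    (by
      intro y hy
      rcases List.mem_append.1 hy with hy | hy <;>
        simp [List.eq_of_mem_replicate hy])
    (by simp)
    (by
      intro y hy hyc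
      exact hc1 (hyc ▸ hy))
    (by simp)
  exact ⟨this.1.symm, this.2.2.symm⟩

theorem plusstar_notin {L : Set (List Al)}
    (hsub : ∀ w, w ∈ L → w.count Al.c = 2 →
      ∃ w1 w2, Al.c ∉ w1 ∧ Al.c ∉ w2 ∧ w1.count Al.b ≤ w1.count Al.a ∧
        w2.count Al.b ≤ w2.count Al.a ∧ w = (Al.c :: w1) ++ (Al.c :: w2))
    (hP : ∀ i k : ℕ, k ≤ i → ∀ Z, (Z = [] ∨ Z = [Al.a, Al.b]) → shape true i k Z ∈ L) :
    L ∉ RDFAwtlLangs Al := by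
  refine alcore (fr := true) ?_ ?_ ?_ ?_
  · intro i k hk
    exact hP i k hk [] (Or.inl rfl)
  · -- axN1
    intro i k hik hmem
    obtain ⟨w1, w2, hc1, hc2, hb1, hb2, heq⟩ :=
      hsub _ hmem (shape_count_c (by simp))
    obtain ⟨h1, -⟩ := shape_match (by simp) hc1 hc2 heq
    rw [h1] at hb1
    simp [List.count_append, List.count_replicate] at hb1
    omega
  · -- axN2
    intro i k z hz hmem
    have hZc : Al.c ∉ List.replicate z Al.b := by simp
    obtain ⟨w1, w2, hc1, hc2, hb1, hb2, heq⟩ :=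
      hsub _ hmem (shape_count_c hZc)
    obtain ⟨-, h2⟩ := shape_match hZc hc1 hc2 heq
    rw [h2] at hb2
    simp [List.count_replicate] at hb2
    omega
  · -- axA1
    intro j Ad LB hAd
    refine ⟨LB + j, [Al.a, Al.b], LB + j + 1, [Al.b], by simp, by simp, by omega,
      by omega, ?_, ?_, ?_⟩
    · exact hP (LB + j) j (by omega) [Al.a, Al.b] (Or.inr rfl)
    · intro hmem
      have hZc : Al.c ∉ [Al.b] := by simp
      obtain ⟨w1, w2, hc1, hc2, hb1, hb2, heq⟩ :=
        hsub _ hmem (shape_count_c hZc)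
      obtain ⟨-, h2⟩ := shape_match hZc hc1 hc2 heq
      rw [h2] at hb2
      simp at hb2
    · have : LB + j + 1 - Ad = (LB + j - Ad) + 1 := by omega
      rw [this, List.replicate_succ']
      simp

theorem lcrstar_notin : (KStar.kstar LcR : Language Al) ∉ RDFAwtlLangs Al := by
  refine plusstar_notin (fun w hw hc => kstar_twoC hw hc) ?_
  intro i k hk Z hZ
  refine Language.mem_kstar.2 ?_
  refine ⟨[Al.c :: (List.replicate i Al.a ++ List.replicate k Al.b), Al.c :: Z],
    ?_, ?_⟩
  · rw [shape_true]
    simp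
  · intro y hy
    rcases List.mem_cons.1 hy with rfl | hy
    · refine ⟨List.replicate i Al.a ++ List.replicate k Al.b, ?_, ?_, rfl⟩
      · exact c_notin_ab
      · simp [List.count_append, List.count_replicate]
        exact hk
    · rcases List.mem_singleton.1 (by simpa using hy) with rfl
      rcases hZ with rfl | rfl
      · exact ⟨[], by simp, by simp, rfl⟩
      · exact ⟨[Al.a, Al.b], by simp, by simp, rfl⟩

theorem lcrplus_notin : (LcR * KStar.kstar LcR : Language Al) ∉ RDFAwtlLangs Al := by
  refine plusstar_notin (fun w hw hc => prod_twoC hw hc) ?_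
  intro i k hk Z hZ
  refine Language.mem_mul.2 ?_
  refine ⟨Al.c :: (List.replicate i Al.a ++ List.replicate k Al.b), ?_,
    Al.c :: Z, ?_, ?_⟩
  · refine ⟨List.replicate i Al.a ++ List.replicate k Al.b, ?_, ?_, rfl⟩
    · exact c_notin_ab
    · simp [List.count_append, List.count_replicate]
      exact hk
  · rw [Language.mem_kstar]
    refine ⟨[Al.c :: Z], by simp, ?_⟩
    intro y hy
    rcases List.mem_singleton.1 hy with rfl
    rcases hZ with rfl | rfl
    · exact ⟨[], by simp, by simp, rfl⟩
    · exact ⟨[Al.a, Al.b], by simp, by simp, rfl⟩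
  · rw [shape_true]
    simp
/-! ### Generic run machinery over the alphabet `AB` -/

inductive GEv2 : Type
  | A | B | E
deriving DecidableEq

open Classical in
noncomputable def gnext2 {Q : Type} (A : RNFAwtl Q AB) (q : Q) : Option (GEv2 × Q) :=
  if AB.a ∉ A.τ q then (pick (A.δ q AB.a)).map (fun p => (GEv2.A, p))
  else if AB.b ∉ A.τ q then (pick (A.δ q AB.b)).map (fun p => (GEv2.B, p))
  else if q ∈ A.Facc then none
  else (pick (A.δend q)).map (fun p => (GEv2.E, p))

theorem gnext2_inv {Q : Type} {A : RNFAwtl Q AB} {q q' : Q} {e : GEv2}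
    (h : gnext2 A q = some (e, q')) :
    (e = GEv2.A ∧ AB.a ∉ A.τ q ∧ q' ∈ A.δ q AB.a) ∨
    (e = GEv2.B ∧ AB.a ∈ A.τ q ∧ AB.b ∉ A.τ q ∧ q' ∈ A.δ q AB.b) ∨
    (e = GEv2.E ∧ AB.a ∈ A.τ q ∧ AB.b ∈ A.τ q ∧ q ∉ A.Facc ∧ q' ∈ A.δend q) := by
  unfold gnext2 at h
  by_cases h1 : AB.a ∉ A.τ q
  · rw [if_pos h1, Option.map_eq_some_iff] at h
    obtain ⟨p, hp, heq⟩ := h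
    cases heq
    exact Or.inl ⟨rfl, h1, pick_eq_some hp⟩
  rw [if_neg h1] at h
  by_cases h2 : AB.b ∉ A.τ q
  · rw [if_pos h2, Option.map_eq_some_iff] at h
    obtain ⟨p, hp, heq⟩ := h
    cases heq
    exact Or.inr (Or.inl ⟨rfl, not_not.1 h1, h2, pick_eq_some hp⟩)
  rw [if_neg h2] at h
  by_cases h3 : q ∈ A.Facc
  · rw [if_pos h3] at h
    cases h
  · rw [if_neg h3, Option.map_eq_some_iff] at h
    obtain ⟨p, hp, heq⟩ := h
    cases heq
    exact Or.inr (Or.inr ⟨rfl, not_not.1 h1, not_not.1 h2, h3, pick_eq_some hp⟩)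

theorem gnext2_none_inv {Q : Type} {A : RNFAwtl Q AB} {q : Q}
    (h : gnext2 A q = none) :
    (AB.a ∉ A.τ q ∧ A.δ q AB.a = ∅) ∨
    (AB.a ∈ A.τ q ∧ AB.b ∉ A.τ q ∧ A.δ q AB.b = ∅) ∨
    (AB.a ∈ A.τ q ∧ AB.b ∈ A.τ q ∧ q ∈ A.Facc) ∨
    (AB.a ∈ A.τ q ∧ AB.b ∈ A.τ q ∧ q ∉ A.Facc ∧ A.δend q = ∅) := by
  unfold gnext2 at h
  by_cases h1 : AB.a ∉ A.τ q
  · rw [if_pos h1, Option.map_eq_none_iff] at h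
    exact Or.inl ⟨h1, pick_eq_none h⟩
  rw [if_neg h1] at h
  by_cases h2 : AB.b ∉ A.τ q
  · rw [if_pos h2, Option.map_eq_none_iff] at h
    exact Or.inr (Or.inl ⟨not_not.1 h1, h2, pick_eq_none h⟩)
  rw [if_neg h2] at h
  by_cases h3 : q ∈ A.Facc
  · exact Or.inr (Or.inr (Or.inl ⟨not_not.1 h1, not_not.1 h2, h3⟩))
  · rw [if_neg h3, Option.map_eq_none_iff] at h
    exact Or.inr (Or.inr (Or.inr ⟨not_not.1 h1, not_not.1 h2, h3, pick_eq_none h⟩))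

section ABCore

variable {Q : Type} (A : RNFAwtl Q AB) (q0 : Q)

noncomputable def gs2 : ℕ → Q
  | 0 => q0
  | t + 1 =>
    match gnext2 A (gs2 t) with
    | some (_, q') => q'
    | none => gs2 t

noncomputable def gev2 (t : ℕ) : Option GEv2 := (gnext2 A (gs2 A q0 t)).map Prod.fst

noncomputable def dA : ℕ → ℕ
  | 0 => 0
  | t + 1 => dA t + (if gev2 A q0 t = some GEv2.A then 1 else 0)

noncomputable def dB : ℕ → ℕ
  | 0 => 0
  | t + 1 => dB t + (if gev2 A q0 t = some GEv2.B then 1 else 0)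

variable {A q0}

@[simp] theorem gs2_zero : gs2 A q0 0 = q0 := rfl
@[simp] theorem dA_zero : dA A q0 0 = 0 := rfl
@[simp] theorem dB_zero : dB A q0 0 = 0 := rfl

theorem gs2_succ_def (t : ℕ) : gs2 A q0 (t + 1) =
    (match gnext2 A (gs2 A q0 t) with
      | some (_, q') => q'
      | none => gs2 A q0 t) := rfl

theorem gs2_succ {t : ℕ} {e : GEv2} {q' : Q} (h : gnext2 A (gs2 A q0 t) = some (e, q')) :
    gs2 A q0 (t + 1) = q' := by
  rw [gs2_succ_def, h]

theorem gev2_some {t : ℕ} {e : GEv2} {q' : Q}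
    (h : gnext2 A (gs2 A q0 t) = some (e, q')) : gev2 A q0 t = some e := by
  unfold gev2
  rw [h]
  rfl

theorem gev2_elim {t : ℕ} {e : GEv2} (h : gev2 A q0 t = some e) :
    ∃ q', gnext2 A (gs2 A q0 t) = some (e, q') := by
  unfold gev2 at h
  rw [Option.map_eq_some_iff] at h
  obtain ⟨⟨e', q'⟩, h1, h2⟩ := h
  cases h2
  exact ⟨q', h1⟩

theorem dA_succ (t : ℕ) :
    dA A q0 (t + 1) = dA A q0 t + (if gev2 A q0 t = some GEv2.A then 1 else 0) := rfl

theorem dB_succ (t : ℕ) :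
    dB A q0 (t + 1) = dB A q0 t + (if gev2 A q0 t = some GEv2.B then 1 else 0) := rfl

theorem dA_mono {t t' : ℕ} (h : t ≤ t') : dA A q0 t ≤ dA A q0 t' := by
  induction t' with
  | zero => simpa [Nat.le_zero.1 h]
  | succ n ih =>
    rcases Nat.lt_or_ge t (n + 1) with h' | h'
    · refine le_trans (ih (Nat.lt_succ_iff.1 h')) ?_
      rw [dA_succ]
      split_ifs <;> omega
    · rw [le_antisymm h h']

theorem dB_mono {t t' : ℕ} (h : t ≤ t') : dB A q0 t ≤ dB A q0 t' := by
  induction t' with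
  | zero => simpa [Nat.le_zero.1 h]
  | succ n ih =>
    rcases Nat.lt_or_ge t (n + 1) with h' | h'
    · refine le_trans (ih (Nat.lt_succ_iff.1 h')) ?_
      rw [dB_succ]
      split_ifs <;> omega
    · rw [le_antisymm h h']

theorem dA_le_self (t : ℕ) : dA A q0 t ≤ t := by
  induction t with
  | zero => exact le_rfl
  | succ n ih =>
    rw [dA_succ]
    split_ifs <;> omega

theorem dB_le_self (t : ℕ) : dB A q0 t ≤ t := by
  induction t with
  | zero => exact le_rfl
  | succ n ih =>
    rw [dB_succ]
    split_ifs <;> omega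

end ABCore

def shapeAB (i k : ℕ) : List AB := List.replicate i AB.a ++ List.replicate k AB.b

section ABCore2

variable {Q : Type} {A : RNFAwtl Q AB} {q0 : Q}

theorem step2A {t i k : ℕ} {q' : Q}
    (h : gnext2 A (gs2 A q0 t) = some (GEv2.A, q')) (hi : 1 ≤ i) :
    A.Step (gs2 A q0 t, shapeAB i k) (q', shapeAB (i - 1) k) := by
  rcases gnext2_inv h with ⟨-, hx, hδ⟩ | ⟨he, -⟩ | ⟨he, -⟩ <;> try exact absurd he (by simp)
  obtain ⟨j, rfl⟩ : ∃ j, i = j + 1 := ⟨i - 1, by omega⟩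
  refine Or.inl ⟨[], AB.a, List.replicate j AB.a ++ List.replicate k AB.b, ?_,
    by simp, hx, hδ, ?_⟩
  · show shapeAB (j + 1) k = _
    simp [shapeAB, List.replicate_succ]
  · show shapeAB (j + 1 - 1) k = _
    simp [shapeAB]

theorem step2B {t i k : ℕ} {q' : Q}
    (h : gnext2 A (gs2 A q0 t) = some (GEv2.B, q')) (hk : 1 ≤ k) :
    A.Step (gs2 A q0 t, shapeAB i k) (q', shapeAB i (k - 1)) := by
  rcases gnext2_inv h with ⟨he, -⟩ | ⟨-, ha, hx, hδ⟩ | ⟨he, -⟩ <;> try exact absurd he (by simp)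
  obtain ⟨j, rfl⟩ : ∃ j, k = j + 1 := ⟨k - 1, by omega⟩
  refine Or.inl ⟨List.replicate i AB.a, AB.b, List.replicate j AB.b, ?_, ?_, hx, hδ, ?_⟩
  · show shapeAB i (j + 1) = _
    simp [shapeAB, List.replicate_succ]
  · intro y hy
    rw [List.eq_of_mem_replicate hy]
    exact ha
  · show shapeAB i (j + 1 - 1) = _
    simp [shapeAB]

theorem step2E {t i k : ℕ} {q' : Q}
    (h : gnext2 A (gs2 A q0 t) = some (GEv2.E, q')) :
    A.Step (gs2 A q0 t, shapeAB i k) (q', shapeAB i k) := by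
  rcases gnext2_inv h with ⟨he, -⟩ | ⟨he, -⟩ | ⟨-, ha, hb, -, hδ⟩ <;> try exact absurd he (by simp)
  refine Or.inr ⟨?_, hδ, rfl⟩
  intro x _
  cases x
  · exact ha
  · exact hb

/-- Synchronization lemma over `AB`. -/
theorem S2 {i k : ℕ} (t : ℕ)
    (h : ∀ t' < t, ∃ e q', gnext2 A (gs2 A q0 t') = some (e, q') ∧
      (e = GEv2.A → dA A q0 t' < i) ∧ (e = GEv2.B → dB A q0 t' < k)) :
    Relation.ReflTransGen A.Step (q0, shapeAB i k)
      (gs2 A q0 t, shapeAB (i - dA A q0 t) (k - dB A q0 t)) := by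
  induction t with
  | zero =>
    simp only [gs2_zero, dA_zero, dB_zero, Nat.sub_zero]
    exact Relation.ReflTransGen.refl
  | succ t ih =>
    obtain ⟨e, q', hsome, hA, hB⟩ := h t (Nat.lt_succ_self t)
    have IH := ih (fun t' ht' => h t' (Nat.lt_succ_of_lt ht'))
    have e1 : gs2 A q0 (t + 1) = q' := gs2_succ hsome
    have hev : gev2 A q0 t = some e := gev2_some hsome
    cases e with
    | A =>
      have e2 : dA A q0 (t + 1) = dA A q0 t + 1 := by rw [dA_succ, if_pos hev]
      have e3 : dB A q0 (t + 1) = dB A q0 t := by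
        rw [dB_succ, if_neg (by rw [hev]; simp), Nat.add_zero]
      rw [e1, e2, e3, ← Nat.sub_sub]
      exact IH.tail (step2A hsome (by have := hA rfl; omega))
    | B =>
      have e2 : dA A q0 (t + 1) = dA A q0 t := by
        rw [dA_succ, if_neg (by rw [hev]; simp), Nat.add_zero]
      have e3 : dB A q0 (t + 1) = dB A q0 t + 1 := by rw [dB_succ, if_pos hev]
      rw [e1, e2, e3, ← Nat.sub_sub]
      exact IH.tail (step2B hsome (by have := hB rfl; omega))
    | E =>
      have e2 : dA A q0 (t + 1) = dA A q0 t := by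
        rw [dA_succ, if_neg (by rw [hev]; simp), Nat.add_zero]
      have e3 : dB A q0 (t + 1) = dB A q0 t := by
        rw [dB_succ, if_neg (by rw [hev]; simp), Nat.add_zero]
      rw [e1, e2, e3]
      exact IH.tail (step2E hsome)

theorem shapeAB_unfoldA {i k : ℕ} (hi : 1 ≤ i) :
    shapeAB i k = [] ++ AB.a :: (List.replicate (i - 1) AB.a ++
      List.replicate k AB.b) := by
  obtain ⟨j, rfl⟩ : ∃ j, i = j + 1 := ⟨i - 1, by omega⟩
  simp [shapeAB, List.replicate_succ]

theorem shapeAB_unfoldB {i k : ℕ} (hk : 1 ≤ k) :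
    shapeAB i k = List.replicate i AB.a ++ AB.b :: List.replicate (k - 1) AB.b := by
  obtain ⟨j, rfl⟩ : ∃ j, k = j + 1 := ⟨k - 1, by omega⟩
  simp [shapeAB, List.replicate_succ]

theorem transl_all2 {q : Q} (ha : AB.a ∈ A.τ q) (hb : AB.b ∈ A.τ q) (w : List AB) :
    ∀ y ∈ w, y ∈ A.τ q := by
  intro y _
  cases y
  · exact ha
  · exact hb

/-- Goodness of the generic run over `AB`. -/
theorem goodLemma2 (hdet : A.Deterministic) {L : Set (List AB)}
    (hmem : ∀ w, A.AccFrom q0 w ↔ w ∈ L)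
    (axP : ∀ i k : ℕ, i ≤ k → k ≤ 2 * i → shapeAB i k ∈ L)
    (axN : ∀ i k : ℕ, k < i ∨ 2 * i < k → shapeAB i k ∉ L) :
    ∀ t, (gnext2 A (gs2 A q0 t)).isSome := by
  intro t
  induction t using Nat.strong_induction_on with
  | _ t ihg =>
  by_contra hns
  rw [Option.not_isSome_iff_eq_none] at hns
  have hcond : ∀ i k : ℕ, t ≤ i → t ≤ k → ∀ t' < t, ∃ e q',
      gnext2 A (gs2 A q0 t') = some (e, q') ∧
      (e = GEv2.A → dA A q0 t' < i) ∧ (e = GEv2.B → dB A q0 t' < k) := by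
    intro i k hi hk t' ht'
    have hsome := ihg t' ht'
    rw [Option.isSome_iff_exists] at hsome
    obtain ⟨⟨e, q'⟩, hes⟩ := hsome
    have h1 := dA_le_self (A := A) (q0 := q0) t'
    have h2 := dB_le_self (A := A) (q0 := q0) t'
    exact ⟨e, q', hes, fun _ => by omega, fun _ => by omega⟩
  have hrtg : ∀ i k : ℕ, t ≤ i → t ≤ k →
      Relation.ReflTransGen A.Step (q0, shapeAB i k)
        (gs2 A q0 t, shapeAB (i - dA A q0 t) (k - dB A q0 t)) :=
    fun i k hi hk => S2 t (hcond i k hi hk)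
  have hiA := dA_le_self (A := A) (q0 := q0) t
  have hiB := dB_le_self (A := A) (q0 := q0) t
  rcases gnext2_none_inv hns with ⟨haτ, hδ⟩ | ⟨haτ, hbτ, hδ⟩ | ⟨haτ, hbτ, hfacc⟩ |
      ⟨haτ, hbτ, hfacc, hδe⟩
  · -- stuck on a;  the word a^(t+1) b^(2t+2) is wrongly rejected
    refine RNFAwtl.reject_of_stuck hdet (hrtg (t + 1) (2 * t + 2) (by omega) (by omega))
      ?_ ?_ ((hmem _).2 (axP (t + 1) (2 * t + 2) (by omega) (by omega)))
    · exact no_step_canon (shapeAB_unfoldA (i := t + 1 - dA A q0 t)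
        (k := 2 * t + 2 - dB A q0 t) (by omega)) (by simp) haτ hδ
    · refine not_accepting_of (y := AB.a) ?_ haτ
      rw [shapeAB_unfoldA (show 1 ≤ t + 1 - dA A q0 t by omega)]
      simp
  · refine RNFAwtl.reject_of_stuck hdet (hrtg (t + 1) (2 * t + 2) (by omega) (by omega))
      ?_ ?_ ((hmem _).2 (axP (t + 1) (2 * t + 2) (by omega) (by omega)))
    · refine no_step_canon (shapeAB_unfoldB (i := t + 1 - dA A q0 t)
        (k := 2 * t + 2 - dB A q0 t) (by omega)) ?_ hbτ hδ
      intro y hy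
      rw [List.eq_of_mem_replicate hy]
      exact haτ
    · refine not_accepting_of (y := AB.b) ?_ hbτ
      rw [shapeAB_unfoldB (show 1 ≤ 2 * t + 2 - dB A q0 t by omega)]
      simp
  · -- accepting a word with too many b's
    have hacc : A.AccFrom q0 (shapeAB (t + 1) (3 * t + 3)) :=
      RNFAwtl.accFrom_of_rtg A (hrtg (t + 1) (3 * t + 3) (by omega) (by omega))
        ⟨transl_all2 haτ hbτ _, hfacc⟩
    exact axN (t + 1) (3 * t + 3) (by omega) ((hmem _).1 hacc)
  · refine RNFAwtl.reject_of_stuck hdet (hrtg (t + 1) (2 * t + 2) (by omega) (by omega))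
      ?_ ?_ ((hmem _).2 (axP (t + 1) (2 * t + 2) (by omega) (by omega)))
    · exact no_step_end (transl_all2 haτ hbτ _) hδe
    · exact not_accepting_facc hfacc

end ABCore2
theorem abcore {L : Set (List AB)}
    (axP : ∀ i k : ℕ, i ≤ k → k ≤ 2 * i → shapeAB i k ∈ L)
    (axN : ∀ i k : ℕ, k < i ∨ 2 * i < k → shapeAB i k ∉ L) :
    L ∉ RDFAwtlLangs AB := by
  classical
  rintro ⟨Q, hQf, A, hdet, hlang⟩
  haveI := hQf
  obtain ⟨q0, hI⟩ := hdet.1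
  have hmem : ∀ w, A.AccFrom q0 w ↔ w ∈ L := by
    intro w
    rw [← RNFAwtl.accepts_iff A hI w, ← hlang]
    exact Iff.rfl
  have hgood := goodLemma2 (q0 := q0) hdet hmem axP axN
  have hfull : ∀ t, ∃ e q', gnext2 A (gs2 A q0 t) = some (e, q') := by
    intro t
    have h1 := hgood t
    rw [Option.isSome_iff_exists] at h1
    obtain ⟨⟨e, q'⟩, h⟩ := h1
    exact ⟨e, q', h⟩
  obtain ⟨u, v, huv, hgs⟩ : ∃ u v : ℕ, u < v ∧ gs2 A q0 u = gs2 A q0 v := by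
    obtain ⟨x, y, hxy, hgseq⟩ := Fintype.exists_ne_map_eq_of_card_lt
      (f := fun x : Fin (Fintype.card Q + 1) => gs2 A q0 x.val) (by simp)
    rcases Nat.lt_or_ge x.val y.val with h | h
    · exact ⟨x.val, y.val, h, hgseq⟩
    · have hlt : y.val < x.val := by
        rcases Nat.lt_or_ge y.val x.val with h' | h'
        · exact h'
        · exact absurd (Fin.ext (by omega)) hxy
      exact ⟨y.val, x.val, hlt, hgseq.symm⟩
  set p := v - u with hpdef
  have hp1 : 1 ≤ p := by omega
  have hper : ∀ d, gs2 A q0 (u + d + p) = gs2 A q0 (u + d) := by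
    intro d
    induction d with
    | zero =>
      rw [show u + 0 + p = v from by omega]
      exact hgs.symm
    | succ n ih =>
      rw [show u + (n + 1) + p = (u + n + p) + 1 from by omega,
        show u + (n + 1) = (u + n) + 1 from by omega, gs2_succ_def, gs2_succ_def, ih]
  have hpert : ∀ t, u ≤ t → gs2 A q0 (t + p) = gs2 A q0 t := by
    intro t ht
    have h1 := hper (t - u)
    rwa [show u + (t - u) = t from by omega] at h1
  have hevper : ∀ t, u ≤ t → gev2 A q0 (t + p) = gev2 A q0 t := by
    intro t ht
    unfold gev2
    rw [hpert t ht]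
  have hmA : dA A q0 u ≤ dA A q0 (u + p) := dA_mono (by omega)
  have hmB : dB A q0 u ≤ dB A q0 (u + p) := dB_mono (by omega)
  obtain ⟨α, hα⟩ : ∃ α, dA A q0 (u + p) = dA A q0 u + α :=
    ⟨dA A q0 (u + p) - dA A q0 u, by omega⟩
  obtain ⟨β, hβ⟩ : ∃ β, dB A q0 (u + p) = dB A q0 u + β :=
    ⟨dB A q0 (u + p) - dB A q0 u, by omega⟩
  have hshiftA : ∀ t, u ≤ t → dA A q0 (t + p) = dA A q0 t + α := by
    intro t ht
    induction t, ht using Nat.le_induction with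
    | base => exact hα
    | succ n hn ih =>
      rw [show n + 1 + p = (n + p) + 1 from by omega, dA_succ, dA_succ,
        hevper n hn, ih]
      omega
  have hshiftB : ∀ t, u ≤ t → dB A q0 (t + p) = dB A q0 t + β := by
    intro t ht
    induction t, ht using Nat.le_induction with
    | base => exact hβ
    | succ n hn ih =>
      rw [show n + 1 + p = (n + p) + 1 from by omega, dB_succ, dB_succ,
        hevper n hn, ih]
      omega
  by_cases hαβ : α + β = 0
  · -- the run cycles: some word in L is rejected
    have hallE : ∀ t, u ≤ t → t < v → gev2 A q0 t = some GEv2.E := by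
      intro t ht htv
      obtain ⟨e, q', hes⟩ := hfull t
      have hev := gev2_some hes
      cases e with
      | A =>
        exfalso
        have h1 : dA A q0 (t + 1) = dA A q0 t + 1 := by rw [dA_succ, if_pos hev]
        have h2 : dA A q0 t ≥ dA A q0 u := dA_mono ht
        have h3 : dA A q0 v ≥ dA A q0 (t + 1) := dA_mono (by omega)
        have h4 : dA A q0 (u + p) = dA A q0 u + α := hα
        rw [show u + p = v from by omega] at h4
        omega
      | B =>
        exfalso
        have h1 : dB A q0 (t + 1) = dB A q0 t + 1 := by rw [dB_succ, if_pos hev]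
        have h2 : dB A q0 t ≥ dB A q0 u := dB_mono ht
        have h3 : dB A q0 v ≥ dB A q0 (t + 1) := dB_mono (by omega)
        have h4 : dB A q0 (u + p) = dB A q0 u + β := hβ
        rw [show u + p = v from by omega] at h4
        omega
      | E => exact hev
    set m := v + 1 with hmdef
    have hcond : ∀ t' < u, ∃ e q', gnext2 A (gs2 A q0 t') = some (e, q') ∧
        (e = GEv2.A → dA A q0 t' < m) ∧ (e = GEv2.B → dB A q0 t' < m) := by
      intro t' h'
      obtain ⟨e, q', hes⟩ := hfull t'
      have h1 := dA_le_self (A := A) (q0 := q0) t'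
      have h2 := dB_le_self (A := A) (q0 := q0) t'
      exact ⟨e, q', hes, fun _ => by omega, fun _ => by omega⟩
    have hrtg := S2 (i := m) (k := m) u hcond
    obtain ⟨q', hs'⟩ := gev2_elim (hallE u le_rfl huv)
    have hstep : A.Step (gs2 A q0 u, shapeAB (m - dA A q0 u) (m - dB A q0 u))
        (q', shapeAB (m - dA A q0 u) (m - dB A q0 u)) := step2E hs'
    have hchain : ∀ d : ℕ, u + 1 + d ≤ v →
        Relation.ReflTransGen A.Step
          (q', shapeAB (m - dA A q0 u) (m - dB A q0 u))
          (gs2 A q0 (u + 1 + d), shapeAB (m - dA A q0 u) (m - dB A q0 u)) := by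
      intro d
      induction d with
      | zero =>
        intro _
        rw [show u + 1 + 0 = u + 1 from rfl, gs2_succ hs']
      | succ n ih =>
        intro hle
        obtain ⟨q'', hs''⟩ := gev2_elim (hallE (u + 1 + n) (by omega) (by omega))
        have hnext : gs2 A q0 (u + 1 + (n + 1)) = q'' := by
          rw [show u + 1 + (n + 1) = (u + 1 + n) + 1 from by omega]
          exact gs2_succ hs''
        rw [hnext]
        exact (ih (by omega)).tail (step2E hs'')
    have hchain2 := hchain (v - (u + 1)) (by omega)
    rw [show u + 1 + (v - (u + 1)) = v from by omega, ← hgs] at hchain2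
    have hnacc : ¬ A.Accepting (gs2 A q0 u,
        shapeAB (m - dA A q0 u) (m - dB A q0 u)) := by
      rcases gnext2_inv hs' with ⟨he, -⟩ | ⟨he, -⟩ | ⟨-, -, -, hfacc, -⟩ <;>
        try exact absurd he (by simp)
      exact not_accepting_facc hfacc
    exact RNFAwtl.reject_of_cycle hdet hrtg hstep hchain2 hnacc
      ((hmem _).2 (axP m m le_rfl (by omega)))
  · -- progress in every period: pumping invariance
    set M := u + p + 1 with hMdef
    have hsum : ∀ d : ℕ, dA A q0 (u + d * p) + dB A q0 (u + d * p) =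
        dA A q0 u + dB A q0 u + d * (α + β) := by
      intro d
      induction d with
      | zero => simp
      | succ n ih =>
        have e1 : u + (n + 1) * p = (u + n * p) + p := by ring
        rw [e1, hshiftA (u + n * p) (by omega), hshiftB (u + n * p) (by omega)]
        have e2 : (n + 1) * (α + β) = n * (α + β) + (α + β) := by ring
        omega
    have hINV : ∀ i k : ℕ, M ≤ i → M ≤ k →
        (shapeAB i k ∈ L ↔ shapeAB (i + α) (k + β) ∈ L) := by
      intro i k hi hk
      have hex : ∃ t, i ≤ dA A q0 t ∨ k ≤ dB A q0 t := by
        refine ⟨u + (i + k) * p, ?_⟩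
        have h1 := hsum (i + k)
        have h2 : i + k ≤ (i + k) * (α + β) :=
          Nat.le_mul_of_pos_right (i + k) (by omega)
        omega
      obtain ⟨T, hThit, hTmin⟩ : ∃ T, (i ≤ dA A q0 T ∨ k ≤ dB A q0 T) ∧
          ∀ t < T, dA A q0 t < i ∧ dB A q0 t < k := by
        refine ⟨Nat.find hex, Nat.find_spec hex, fun t ht => ?_⟩
        have := Nat.find_min hex ht
        push_neg at this
        omega
      have hTbig : u + p < T := by
        have h1 := dA_le_self (A := A) (q0 := q0) T
        have h2 := dB_le_self (A := A) (q0 := q0) T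
        rcases hThit with h | h <;> omega
      have hminS : ∀ t < T + p, dA A q0 t < i + α ∧ dB A q0 t < k + β := by
        intro t ht
        rcases Nat.lt_or_ge t (u + p) with h' | h'
        · have h1 := dA_le_self (A := A) (q0 := q0) t
          have h2 := dB_le_self (A := A) (q0 := q0) t
          omega
        · have h1 : dA A q0 t = dA A q0 (t - p) + α := by
            have := hshiftA (t - p) (by omega)
            rwa [show t - p + p = t from by omega] at this
          have h2 : dB A q0 t = dB A q0 (t - p) + β := by
            have := hshiftB (t - p) (by omega)
            rwa [show t - p + p = t from by omega] at this
          have h3 := hTmin (t - p) (by omega)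
          omega
      have hcond1 : ∀ t' < T, ∃ e q', gnext2 A (gs2 A q0 t') = some (e, q') ∧
          (e = GEv2.A → dA A q0 t' < i) ∧ (e = GEv2.B → dB A q0 t' < k) := by
        intro t' h'
        obtain ⟨e, q', hes⟩ := hfull t'
        exact ⟨e, q', hes, fun _ => (hTmin t' h').1, fun _ => (hTmin t' h').2⟩
      have hcond2 : ∀ t' < T + p, ∃ e q', gnext2 A (gs2 A q0 t') = some (e, q') ∧
          (e = GEv2.A → dA A q0 t' < i + α) ∧ (e = GEv2.B → dB A q0 t' < k + β) := by
        intro t' h'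
        obtain ⟨e, q', hes⟩ := hfull t'
        exact ⟨e, q', hes, fun _ => (hminS t' h').1, fun _ => (hminS t' h').2⟩
      have hrtg1 := S2 (i := i) (k := k) T hcond1
      have hrtg2 := S2 (i := i + α) (k := k + β) (T + p) hcond2
      have e1 : dA A q0 (T + p) = dA A q0 T + α := hshiftA T (by omega)
      have e2 : dB A q0 (T + p) = dB A q0 T + β := hshiftB T (by omega)
      rw [hpert T (by omega), e1, e2,
        show i + α - (dA A q0 T + α) = i - dA A q0 T from by omega,
        show k + β - (dB A q0 T + β) = k - dB A q0 T from by omega] at hrtg2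
      constructor
      · intro h
        exact (hmem _).1 (RNFAwtl.transfer hdet hrtg1 hrtg2 ((hmem _).2 h))
      · intro h
        exact (hmem _).1 (RNFAwtl.transfer hdet hrtg2 hrtg1 ((hmem _).2 h))
    have h1 : α ≤ β := by
      by_contra hc
      push_neg at hc
      have hin : shapeAB (M + α) (M + β) ∈ L :=
        (hINV M M le_rfl le_rfl).1 (axP M M le_rfl (by omega))
      exact axN (M + α) (M + β) (Or.inl (by omega)) hin
    have h2 : β ≤ 2 * α := by
      by_contra hc
      push_neg at hc
      have hin : shapeAB (M + α) (2 * M + β) ∈ L :=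
        (hINV M (2 * M) le_rfl (by omega)).1 (axP M (2 * M) (by omega) (by omega))
      exact axN (M + α) (2 * M + β) (Or.inr (by omega)) hin
    have hα1 : 1 ≤ α := by omega
    by_cases hβα : β = α
    · have hnin : shapeAB M (2 * M + 1) ∉ L := axN _ _ (Or.inr (by omega))
      have hin : shapeAB (M + α) (2 * M + 1 + β) ∈ L :=
        axP _ _ (by omega) (by omega)
      exact hnin ((hINV M (2 * M + 1) le_rfl (by omega)).2 hin)
    · have hnin : shapeAB (M + 1) M ∉ L := axN _ _ (Or.inl (by omega))
      have hin : shapeAB (M + 1 + α) (M + β) ∈ L := axP _ _ (by omega) (by omega)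
      exact hnin ((hINV (M + 1) M (by omega) le_rfl).2 hin)
theorem shuffles_count {γ : Type} [BEq γ] {x : γ} {u v w : List γ} (h : Shuffles u v w) :
    w.count x = u.count x + v.count x := by
  induction h with
  | nil => simp
  | left _ ih => simp [List.count_cons, ih]; omega
  | right _ ih => simp [List.count_cons, ih]; omega

theorem shuffle_split : ∀ (w : List AB) (p q r s : ℕ), w.count AB.a = p + r →
    w.count AB.b = q + s →
    ∃ u v, u.count AB.a = p ∧ u.count AB.b = q ∧ v.count AB.a = r ∧
      v.count AB.b = s ∧ Shuffles u v w := by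
  intro w
  induction w with
  | nil =>
    intro p q r s h1 h2
    simp at h1 h2
    refine ⟨[], [], by simp; omega, by simp; omega, by simp; omega, by simp; omega,
      Shuffles.nil⟩
  | cons x w ih =>
    intro p q r s h1 h2
    cases x with
    | a =>
      simp [List.count_cons] at h1 h2
      by_cases hp : p = 0
      · obtain ⟨u, v, hu1, hu2, hv1, hv2, hsh⟩ := ih p q (r - 1) s (by omega) (by omega)
        exact ⟨u, AB.a :: v, hu1, hu2, by simp [List.count_cons]; omega,
          by simpa [List.count_cons] using hv2, Shuffles.right hsh⟩
      · obtain ⟨u, v, hu1, hu2, hv1, hv2, hsh⟩ := ih (p - 1) q r s (by omega) (by omega)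
        exact ⟨AB.a :: u, v, by simp [List.count_cons]; omega,
          by simpa [List.count_cons] using hu2, hv1, hv2, Shuffles.left hsh⟩
    | b =>
      simp [List.count_cons] at h1 h2
      by_cases hq : q = 0
      · obtain ⟨u, v, hu1, hu2, hv1, hv2, hsh⟩ := ih p q r (s - 1) (by omega) (by omega)
        exact ⟨u, AB.b :: v, hu1, hu2, by simpa [List.count_cons] using hv1,
          by simp [List.count_cons]; omega, Shuffles.right hsh⟩
      · obtain ⟨u, v, hu1, hu2, hv1, hv2, hsh⟩ := ih p (q - 1) r s (by omega) (by omega)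
        exact ⟨AB.b :: u, v, by simpa [List.count_cons] using hu1,
          by simp [List.count_cons]; omega, hv1, hv2, Shuffles.left hsh⟩

theorem shuffle_eq : shuffleLang Leq L2eq =
    { w : List AB | w.count AB.a ≤ w.count AB.b ∧ w.count AB.b ≤ 2 * w.count AB.a } := by
  ext w
  constructor
  · rintro ⟨u, hu, v, hv, hsh⟩
    have ha := shuffles_count (x := AB.a) hsh
    have hb := shuffles_count (x := AB.b) hsh
    have hu' : u.count AB.a = u.count AB.b := hu
    have hv' : 2 * v.count AB.a = v.count AB.b := hv
    constructor <;> omega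
  · rintro ⟨h1, h2⟩
    obtain ⟨u, v, hu1, hu2, hv1, hv2, hsh⟩ := shuffle_split w
      (2 * w.count AB.a - w.count AB.b) (2 * w.count AB.a - w.count AB.b)
      (w.count AB.b - w.count AB.a) (2 * (w.count AB.b - w.count AB.a))
      (by omega) (by omega)
    refine ⟨u, ?_, v, ?_, hsh⟩
    · show u.count AB.a = u.count AB.b
      omega
    · show 2 * v.count AB.a = v.count AB.b
      omega

theorem shapeAB_count_a (i k : ℕ) : (shapeAB i k).count AB.a = i := by
  simp [shapeAB, List.count_append, List.count_replicate]

theorem shapeAB_count_b (i k : ℕ) : (shapeAB i k).count AB.b = k := by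
  simp [shapeAB, List.count_append, List.count_replicate]

theorem shuffle_notin : shuffleLang Leq L2eq ∉ RDFAwtlLangs AB := by
  rw [shuffle_eq]
  refine abcore ?_ ?_
  · intro i k h1 h2
    rw [Set.mem_setOf_eq, shapeAB_count_a, shapeAB_count_b]
    exact ⟨h1, h2⟩
  · intro i k h hmem
    rw [Set.mem_setOf_eq, shapeAB_count_a, shapeAB_count_b] at hmem
    omega

theorem rev_lcr_eq : List.reverse '' (LcR : Set (List Al)) = LcSet := by
  ext w
  constructor
  · rintro ⟨v, ⟨u, hcu, hcnt, rfl⟩, rfl⟩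
    refine ⟨u.reverse, by simpa using hcu, ?_, by simp⟩
    simpa [List.count_reverse] using hcnt
  · rintro ⟨u, hcu, hcnt, rfl⟩
    refine ⟨Al.c :: u.reverse, ⟨u.reverse, by simpa using hcu, ?_, rfl⟩, ?_⟩
    · simpa [List.count_reverse] using hcnt
    · simp

theorem lge_c_eq : { w : List Al | ∃ u ∈ Lge, w = u ++ [Al.c] } = LcSet := by
  ext w
  constructor
  · rintro ⟨u, ⟨hcu, hcnt⟩, rfl⟩
    exact ⟨u, hcu, hcnt, rfl⟩
  · rintro ⟨u, hcu, hcnt, rfl⟩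
    exact ⟨u, ⟨hcu, hcnt⟩, rfl⟩

/-- ℒ(RDFAwtl) is not closed under reversal, (disjoint) product,
Kleene plus, Kleene star, or shuffle. -/
theorem RDFAwtl_nonclosure_rev_prod_plus_star_shuffle :
    (LcR : Set (List Al)) ∈ DFAwtlLangs Al ∧ Lge ∈ DFAwtlLangs Al ∧
    ({[Al.c]} : Set (List Al)) ∈ DFAwtlLangs Al ∧
    List.reverse '' (LcR : Set (List Al)) ∉ RDFAwtlLangs Al ∧
    { w : List Al | ∃ u ∈ Lge, w = u ++ [Al.c] } ∉ RDFAwtlLangs Al ∧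
    (LcR * KStar.kstar LcR : Language Al) ∉ RDFAwtlLangs Al ∧
    (KStar.kstar LcR : Language Al) ∉ RDFAwtlLangs Al ∧
    Leq ∈ DFAwtlLangs AB ∧ L2eq ∈ DFAwtlLangs AB ∧
    shuffleLang Leq L2eq ∉ RDFAwtlLangs AB := by
  refine ⟨lcr_mem, lge_mem, singc_mem, ?_, ?_, lcrplus_notin, lcrstar_notin,
    leq_mem, l2eq_mem, shuffle_notin⟩
  · rw [rev_lcr_eq]
    exact lcset_notin
  · rw [lge_c_eq]
    exact lcset_notin
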